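/- arXiv:1906.07215 — 4 statements merged into one kernel-verified Lean document; each statement's English description precedes it below -/
import Mathlib

section
/- Let k be a commutative ring, C a cone compatible with an additive total order ≺ on ℤ^n, and f ∈ k_C⟦x_1,...,x_n⟧ with f(0) = a_0 invertible in k. Then there exists f^{-1} ∈ k_C⟦x_1,...,x_n⟧ such that f · f^{-1} = 1. -/
/-- Membership of an integer vector in the cone generated by the `v i`. -/
def InConeZ {n m : ℕ} (v : Fin m → (Fin n → ℤ)) (g : Fin n → ℤ) : Prop :=
  ∃ α : Fin m → ℝ, (∀ i, 0 ≤ α i) ∧ ∀ j, (g j : ℝ) = ∑ i, α i * (v i j : ℝ)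

set_option linter.unusedVariables false
set_option linter.unusedSectionVars false
set_option maxHeartbeats 1000000

noncomputable def invAux {k : Type*} [CommRing k] {n : ℕ} (u : k) (f : (Fin n → ℤ) → k)
    (D : (Fin n → ℤ) → Finset (Fin n → ℤ)) (ν : (Fin n → ℤ) → ℕ)
    (hD : ∀ c g, c ≠ 0 → g ∈ D c → ν (c - g) < ν c) : (Fin n → ℤ) → k
  | c =>
    if hc : c = 0 then u
    else -u * ∑ g ∈ (D c).attach, f g.1 * invAux u f D ν hD (c - g.1)
termination_by c => ν c
decreasing_by exact hD c g.1 hc g.2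

theorem exists_rat_retraction : ∃ π : ℝ →ₗ[ℚ] ℚ, π 1 = 1 := by
  have li : LinearIndepOn ℚ id ({(1:ℝ)} : Set ℝ) :=
    (linearIndepOn_singleton_iff ℚ).mpr one_ne_zero
  let B := Module.Basis.extend li
  have h1 : (1:ℝ) ∈ li.extend (Set.subset_univ _) :=
    li.subset_extend _ (Set.mem_singleton _)
  refine ⟨B.coord ⟨1, h1⟩, ?_⟩
  have h2 : B ⟨1, h1⟩ = 1 := Module.Basis.extend_apply_self li ⟨1, h1⟩
  calc (B.coord ⟨1, h1⟩) 1 = (B.coord ⟨1, h1⟩) (B ⟨1, h1⟩) := by rw [h2]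
    _ = 1 := by simp [Module.Basis.coord_apply, Module.Basis.repr_self]


section Order

variable {n m : ℕ} (r : (Fin n → ℤ) → (Fin n → ℤ) → Prop)
  (htot : IsStrictTotalOrder (Fin n → ℤ) r)
  (hadd : ∀ a b c : Fin n → ℤ, r a b → r (a + c) (b + c))
  (v : Fin m → (Fin n → ℤ)) (hv : ∀ i, r 0 (v i))

include htot hadd hv in
theorem no_nat_combo {ι : Type} [Fintype ι] (σ : ι → Fin m) (a : ι → ℕ)
    (h : ∑ x : ι, a x • v (σ x) = 0) : ∀ x, a x = 0 := by
  classical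
  have tr : ∀ {x y z}, r x y → r y z → r x z :=
    fun hxy hyz => htot.toIsStrictOrder.toIsTrans.trans _ _ _ hxy hyz
  have irr : ∀ x, ¬ r x x := htot.toIsStrictOrder.toIrrefl.irrefl
  have posAdd : ∀ x y, r 0 x → r 0 y → r 0 (x + y) := by
    intro x y hx hy
    have h2 := hadd 0 x y hx
    rw [zero_add] at h2
    exact tr hy h2
  have posSmul : ∀ (b : ℕ) x, r 0 x → b ≠ 0 → r 0 (b • x) := by
    intro b x hx hb
    induction b with
    | zero => omega
    | succ c ih =>
      by_cases hc : c = 0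
      · subst hc; simpa using hx
      · rw [succ_nsmul]
        exact posAdd _ _ (ih hc) hx
  have weak : ∀ (s : Finset ι),
      r 0 (∑ x ∈ s, a x • v (σ x)) ∨ (∑ x ∈ s, a x • v (σ x)) = 0 := by
    intro s
    induction s using Finset.induction_on with
    | empty => right; simp
    | insert y s' hx ih =>
      rw [Finset.sum_insert hx]
      have hy : r 0 (a y • v (σ y)) ∨ a y • v (σ y) = 0 := by
        by_cases hz : a y = 0
        · right; simp [hz]
        · left; exact posSmul _ _ (hv (σ y)) hz
      rcases hy with hy | hy <;> rcases ih with ih | ih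
      · left; exact posAdd _ _ hy ih
      · left; rw [ih, add_zero]; exact hy
      · left; rw [hy, zero_add]; exact ih
      · right; rw [hy, ih, add_zero]
  intro x0
  by_contra hx0
  have hpos : r 0 (∑ x : ι, a x • v (σ x)) := by
    rw [← Finset.add_sum_erase Finset.univ _ (Finset.mem_univ x0)]
    have h1 : r 0 (a x0 • v (σ x0)) := posSmul _ _ (hv (σ x0)) hx0
    rcases weak (Finset.univ.erase x0) with h2 | h2
    · exact posAdd _ _ h1 h2
    · rw [h2, add_zero]; exact h1
  rw [h] at hpos
  exact irr _ hpos


include htot hadd hv in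
theorem zero_not_mem_hull :
    (0 : Fin n → ℝ) ∉ convexHull ℝ (Set.range fun i => (fun j => ((v i j : ℝ)))) := by
  intro h0
  obtain ⟨ι, hfin, z, wt, hz, haff, hwpos, hwsum, hcomb⟩ :=
    eq_pos_convex_span_of_mem_convexHull h0
  choose σ hσ using fun i => hz (Set.mem_range_self i)
  obtain ⟨π, hπ⟩ := exists_rat_retraction
  set q : ι → ℚ := fun i => π (wt i) with hq_def
  have hqsum : ∑ i, q i = 1 := by
    rw [hq_def]
    rw [← map_sum π wt Finset.univ, hwsum, hπ]
  have hzij : ∀ i j, z i j = ((v (σ i) j : ℤ) : ℝ) := by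
    intro i j
    exact (congrFun (hσ i) j).symm
  have hcombj : ∀ j, ∑ i, wt i * ((v (σ i) j : ℤ) : ℝ) = 0 := by
    intro j
    have := congrFun hcomb j
    simp only [Finset.sum_apply, Pi.smul_apply, smul_eq_mul, Pi.zero_apply] at this
    rw [← this]
    exact Finset.sum_congr rfl fun i _ => by rw [hzij]
  have hqj : ∀ j, ∑ i, q i * ((v (σ i) j : ℤ) : ℚ) = 0 := by
    intro j
    have h1 : π (∑ i, wt i * ((v (σ i) j : ℤ) : ℝ)) = 0 := by rw [hcombj j, map_zero]
    rw [map_sum] at h1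
    rw [← h1]
    refine Finset.sum_congr rfl fun i _ => ?_
    have h2 : wt i * ((v (σ i) j : ℤ) : ℝ) = (v (σ i) j : ℤ) • wt i := by
      rw [zsmul_eq_mul]; ring
    rw [h2, map_zsmul, zsmul_eq_mul]; ring
  -- the rational weights coincide with the real ones
  have hwq : ∀ i, ((q i : ℚ) : ℝ) = wt i := by
    have hsum' : ∑ i, ((q i : ℚ) : ℝ) = 1 := by
      rw [← Rat.cast_sum]
      rw [hqsum, Rat.cast_one]
    have hcomb' : ∑ i, ((q i : ℚ) : ℝ) • z i = (0 : Fin n → ℝ) := by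
      funext j
      simp only [Finset.sum_apply, Pi.smul_apply, smul_eq_mul, Pi.zero_apply]
      have := hqj j
      have hcast : ((∑ i, q i * ((v (σ i) j : ℤ) : ℚ) : ℚ) : ℝ) = 0 := by rw [this]; simp
      push_cast at hcast
      rw [← hcast]
      exact Finset.sum_congr rfl fun i _ => by rw [hzij]
    have := (affineIndependent_iff_eq_of_fintype_affineCombination_eq ℝ z).mp haff
      (fun i => ((q i : ℚ) : ℝ)) wt hsum' hwsum ?_
    · exact fun i => congrFun this i
    · rw [Finset.affineCombination_eq_linear_combination _ _ _ hsum',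
        Finset.affineCombination_eq_linear_combination _ _ _ hwsum, hcomb', hcomb]
  have hqpos : ∀ i, 0 < q i := by
    intro i
    have := hwpos i
    rw [← hwq i] at this
    exact_mod_cast this
  -- clear denominators
  set d : ℕ := ∏ i, (q i).den with hd_def
  have hdpos : 0 < d := Finset.prod_pos fun i _ => (q i).pos
  have hdvd : ∀ i, (q i).den ∣ d := fun i => Finset.dvd_prod_of_mem _ (Finset.mem_univ i)
  set a : ι → ℕ := fun i => (q i).num.toNat * (d / (q i).den) with ha_def
  have hacast : ∀ i, ((a i : ℕ) : ℚ) = q i * d := by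
    intro i
    have hde : ((q i).den : ℚ) * ((d / (q i).den : ℕ) : ℚ) = (d : ℚ) := by
      rw [← Nat.cast_mul, Nat.mul_div_cancel' (hdvd i)]
    have hnum : (((q i).num.toNat : ℤ) : ℚ) = ((q i).num : ℚ) := by
      rw [Int.toNat_of_nonneg (le_of_lt (Rat.num_pos.mpr (hqpos i)))]
    have hmd : q i * ((q i).den : ℚ) = ((q i).num : ℚ) := by
      have h3 := Rat.num_div_den (q i)
      rw [div_eq_iff (by exact_mod_cast (q i).den_ne_zero : ((q i).den:ℚ) ≠ 0)] at h3
      exact h3.symm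
    calc ((a i : ℕ) : ℚ) = ((q i).num.toNat : ℚ) * ((d / (q i).den : ℕ) : ℚ) := by
          rw [ha_def]; push_cast; ring
      _ = ((q i).num : ℚ) * ((d / (q i).den : ℕ) : ℚ) := by
          rw [show ((q i).num.toNat : ℚ) = (((q i).num.toNat : ℤ) : ℚ) by push_cast; ring, hnum]
      _ = q i * (((q i).den : ℚ) * ((d / (q i).den : ℕ) : ℚ)) := by rw [← hmd]; ring
      _ = q i * d := by rw [hde]
  have hcombZ : ∑ i, a i • v (σ i) = 0 := by
    funext j
    have : ((∑ i, a i • v (σ i)) j : ℚ) = 0 := by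
      have he : (∑ i, a i • v (σ i)) j = ∑ i, (a i : ℤ) * v (σ i) j := by
        rw [Finset.sum_apply]
        exact Finset.sum_congr rfl fun i _ => by
          simp [nsmul_eq_mul]
      rw [he]
      push_cast
      have : ∀ i : ι, ((a i : ℕ) : ℚ) * ((v (σ i) j : ℤ) : ℚ)
          = (d : ℚ) * (q i * ((v (σ i) j : ℤ) : ℚ)) := fun i => by rw [hacast i]; ring
      rw [Finset.sum_congr rfl fun i _ => this i, ← Finset.mul_sum, hqj j, mul_zero]
    exact_mod_cast this
  have hall := no_nat_combo r htot hadd v hv σ a hcombZ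
  -- but some coefficient is positive
  have : Nonempty ι := by
    by_contra hni
    rw [not_nonempty_iff] at hni
    rw [Finset.univ_eq_empty, Finset.sum_empty] at hwsum
    exact one_ne_zero hwsum.symm
  obtain ⟨i0⟩ := this
  have h1 : 0 < (q i0).num.toNat := by
    have := Rat.num_pos.mpr (hqpos i0)
    omega
  have h2 : 0 < d / (q i0).den := Nat.div_pos (Nat.le_of_dvd hdpos (hdvd i0)) (q i0).pos
  have := hall i0
  rw [ha_def] at this
  simp only at this
  exact (Nat.mul_pos h1 h2).ne' this


include htot hadd hv in
theorem exists_functional :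
    ∃ (L : (Fin n → ℤ) → ℝ) (δ B : ℝ), 0 < δ ∧ 0 ≤ B ∧
      (∀ a b, L (a + b) = L a + L b) ∧
      ∀ g, InConeZ v g →
        0 ≤ L g ∧ (g ≠ 0 → δ ≤ L g) ∧ ∀ j, |(g j : ℝ)| ≤ B * L g := by
  classical
  set Vr : Fin m → (Fin n → ℝ) := fun i => fun j => (v i j : ℝ) with hVr_def
  have hK : (0 : Fin n → ℝ) ∉ convexHull ℝ (Set.range Vr) := zero_not_mem_hull r htot hadd v hv
  obtain ⟨φ, u1, hsep, hu1⟩ := geometric_hahn_banach_closed_point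
    (convex_convexHull ℝ (Set.range Vr))
    ((Set.finite_range Vr).isCompact_convexHull (𝕜 := ℝ)).isClosed hK
  -- hsep : ∀ a ∈ hull, φ a < u1 ; hu1 : u1 < φ 0 = 0
  have hφ0 : φ (0 : Fin n → ℝ) = 0 := map_zero φ
  set u0 : ℝ := -u1 with hu0_def
  have hu0pos : 0 < u0 := by rw [hu0_def]; rw [hφ0] at hu1; linarith
  set ψ : (Fin n → ℝ) →L[ℝ] ℝ := -φ with hψ_def
  have hψV : ∀ i, u0 < ψ (Vr i) := by
    intro i
    have := hsep (Vr i) (subset_convexHull ℝ _ (Set.mem_range_self i))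
    simp only [hψ_def, ContinuousLinearMap.neg_apply, hu0_def]
    linarith
  set C0 : ℝ := ∑ i, ∑ j, |(v i j : ℝ)| with hC0_def
  have hC0 : 0 ≤ C0 :=
    Finset.sum_nonneg fun i _ => Finset.sum_nonneg fun j _ => abs_nonneg _
  have hVb : ∀ i j, |(v i j : ℝ)| ≤ C0 := by
    intro i j
    calc |(v i j : ℝ)| ≤ ∑ j', |(v i j' : ℝ)| :=
          Finset.single_le_sum (f := fun j' => |(v i j' : ℝ)|)
            (fun j' _ => abs_nonneg _) (Finset.mem_univ j)
      _ ≤ C0 := Finset.single_le_sum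
          (f := fun i => ∑ j', |(v i j' : ℝ)|)
          (fun i' _ => Finset.sum_nonneg fun j' _ => abs_nonneg _) (Finset.mem_univ i)
  refine ⟨fun g => ψ (fun j => (g j : ℝ)), u0 / (C0 + 1), (C0 + 1) / u0,
    div_pos hu0pos (by linarith), le_of_lt (div_pos (by linarith) hu0pos), ?_, ?_⟩
  · intro a b
    have h : (fun j => (((a + b) j : ℤ) : ℝ)) = (fun j => ((a j : ℤ) : ℝ)) + fun j => ((b j : ℤ) : ℝ) := by
      funext j; push_cast; simp
    show ψ (fun j => (((a + b) j : ℤ) : ℝ))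
      = ψ (fun j => ((a j : ℤ) : ℝ)) + ψ (fun j => ((b j : ℤ) : ℝ))
    rw [h, map_add]
  · rintro g ⟨α, hα, hsum⟩
    beta_reduce
    have hgR : (fun j => ((g j : ℤ) : ℝ)) = ∑ i, α i • Vr i := by
      funext j
      rw [hsum j, Finset.sum_apply]
      exact Finset.sum_congr rfl fun i _ => by simp [hVr_def]
    have hLg : ψ (fun j => ((g j : ℤ) : ℝ)) = ∑ i, α i * ψ (Vr i) := by
      rw [hgR, map_sum]
      exact Finset.sum_congr rfl fun i _ => by rw [map_smul]; simp
    set A : ℝ := ∑ i, α i with hA_def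
    have hA : 0 ≤ A := Finset.sum_nonneg fun i _ => hα i
    have hLA : u0 * A ≤ ψ (fun j => ((g j : ℤ) : ℝ)) := by
      rw [hLg, hA_def, Finset.mul_sum]
      exact Finset.sum_le_sum fun i _ => by
        have := le_of_lt (hψV i)
        calc u0 * α i = α i * u0 := by ring
          _ ≤ α i * ψ (Vr i) := mul_le_mul_of_nonneg_left this (hα i)
          _ = α i * ψ (Vr i) := rfl
    have h0L : 0 ≤ ψ (fun j => ((g j : ℤ) : ℝ)) :=
      le_trans (mul_nonneg (le_of_lt hu0pos) hA) hLA
    have hcoord : ∀ j, |((g j : ℤ) : ℝ)| ≤ A * C0 := by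
      intro j
      rw [hsum j]
      calc |∑ i, α i * ((v i j : ℤ) : ℝ)| ≤ ∑ i, |α i * ((v i j : ℤ) : ℝ)| :=
            Finset.abs_sum_le_sum_abs _ _
        _ ≤ ∑ i, α i * C0 := Finset.sum_le_sum fun i _ => by
            rw [abs_mul, abs_of_nonneg (hα i)]
            exact mul_le_mul_of_nonneg_left (hVb i j) (hα i)
        _ = A * C0 := by rw [hA_def, ← Finset.sum_mul]
    refine ⟨h0L, ?_, ?_⟩
    · intro hg0
      have : ∃ j, g j ≠ 0 := by
        by_contra hc
        push_neg at hc
        exact hg0 (funext hc)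
      obtain ⟨j, hj⟩ := this
      have h1 : (1 : ℝ) ≤ |((g j : ℤ) : ℝ)| := by
        have := Int.one_le_abs hj
        calc (1:ℝ) = ((1:ℤ):ℝ) := by norm_num
          _ ≤ ((|g j| : ℤ) : ℝ) := by exact_mod_cast this
          _ = |((g j : ℤ) : ℝ)| := by push_cast; ring
      have h2 : (1 : ℝ) ≤ A * (C0 + 1) := by
        calc (1:ℝ) ≤ |((g j : ℤ) : ℝ)| := h1
          _ ≤ A * C0 := hcoord j
          _ ≤ A * (C0 + 1) := by nlinarith
      have h3 : u0 / (C0 + 1) ≤ u0 * A := by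
        rw [div_le_iff₀ (by linarith : (0:ℝ) < C0 + 1)]
        nlinarith
      exact le_trans h3 hLA
    · intro j
      calc |((g j : ℤ) : ℝ)| ≤ A * C0 := hcoord j
        _ ≤ A * (C0 + 1) := by nlinarith
        _ = ((C0 + 1) / u0) * (u0 * A) := by field_simp
        _ ≤ ((C0 + 1) / u0) * ψ (fun j => ((g j : ℤ) : ℝ)) := by
            apply mul_le_mul_of_nonneg_left hLA
            exact le_of_lt (div_pos (by linarith) hu0pos)

end Order


/-- a series `f ∈ k_C⟦x_1,…,x_n⟧` whose constant coefficient `f 0` is a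
unit of `k` admits an inverse `f⁻¹ ∈ k_C⟦x_1,…,x_n⟧`, i.e. the convolution product
`f · f⁻¹` is the unit series `1`. -/
theorem stmt_2 (n m : ℕ) (k : Type*) [CommRing k]
    (r : (Fin n → ℤ) → (Fin n → ℤ) → Prop)
    (htot : IsStrictTotalOrder (Fin n → ℤ) r)
    (hadd : ∀ a b c : Fin n → ℤ, r a b → r (a + c) (b + c))
    (v : Fin m → (Fin n → ℤ)) (hv : ∀ i, r 0 (v i))
    (f : (Fin n → ℤ) → k) (hf : ∀ g, f g ≠ 0 → InConeZ v g)
    (hunit : IsUnit (f 0)) :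
    ∃ finv : (Fin n → ℤ) → k, (∀ g, finv g ≠ 0 → InConeZ v g) ∧
      ∀ c : Fin n → ℤ,
        (∑ᶠ p ∈ {p : (Fin n → ℤ) × (Fin n → ℤ) | p.1 + p.2 = c}, f p.1 * finv p.2) =
          if c = 0 then 1 else 0 := by
  classical
  obtain ⟨L, δ, B, hδ, hB, hLadd, hL⟩ := exists_functional r htot hadd v hv
  obtain ⟨w, hw⟩ := hunit
  set u : k := ((w⁻¹ : kˣ) : k) with hu_def
  have hu : f 0 * u = 1 := by rw [← hw]; exact w.mul_inv
  -- basic cone facts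
  have cone0 : InConeZ v 0 := ⟨0, fun i => le_refl 0, fun j => by simp⟩
  have coneAdd : ∀ a b, InConeZ v a → InConeZ v b → InConeZ v (a + b) := by
    rintro a b ⟨α, hα, hαs⟩ ⟨β, hβ, hβs⟩
    refine ⟨α + β, fun i => add_nonneg (hα i) (hβ i), fun j => ?_⟩
    have : ((a + b) j : ℝ) = (a j : ℝ) + (b j : ℝ) := by push_cast; simp
    rw [this, hαs j, hβs j, ← Finset.sum_add_distrib]
    exact Finset.sum_congr rfl fun i _ => by simp [add_mul]
  have hL0 : L 0 = 0 := by
    have := hLadd 0 0; simp at this; linarith [this]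
  -- pointedness
  have pointed : ∀ g, InConeZ v g → InConeZ v (-g) → g = 0 := by
    intro g hg hg'
    by_contra hne
    have h1 : δ ≤ L g := (hL g hg).2.1 hne
    have h2 : 0 ≤ L (-g) := (hL (-g) hg').1
    have h3 : L g + L (-g) = 0 := by rw [← hLadd]; simp [hL0]
    linarith
  -- finiteness of decompositions
  have fin : ∀ c, {g : Fin n → ℤ | g ≠ 0 ∧ InConeZ v g ∧ InConeZ v (c - g)}.Finite := by
    intro c
    apply Set.Finite.subset
      (Set.Finite.pi (t := fun _ : Fin n => Set.Icc (-(⌈B * L c⌉)) ⌈B * L c⌉)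
        (fun _ => Set.finite_Icc _ _))
    rintro g ⟨hg0, hg, hg'⟩
    have hLg : L g ≤ L c := by
      have : L g + L (c - g) = L c := by rw [← hLadd]; congr 1; abel
      have := (hL _ hg').1
      linarith
    have hb : ∀ j, |(g j : ℝ)| ≤ B * L c := by
      intro j
      calc |(g j : ℝ)| ≤ B * L g := (hL g hg).2.2 j
        _ ≤ B * L c := mul_le_mul_of_nonneg_left hLg hB
    intro j _
    have := hb j
    have h2 : ((|g j| : ℤ) : ℝ) ≤ (⌈B * L c⌉ : ℝ) := by
      push_cast
      exact le_trans this (Int.le_ceil _)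
    have h3 : |g j| ≤ ⌈B * L c⌉ := by exact_mod_cast h2
    simp only [Set.mem_Icc]
    exact abs_le.mp h3
  set D : (Fin n → ℤ) → Finset (Fin n → ℤ) := fun c => (fin c).toFinset with hD_def
  have memD : ∀ c g, g ∈ D c ↔ g ≠ 0 ∧ InConeZ v g ∧ InConeZ v (c - g) := by
    intro c g; simp [hD_def, Set.Finite.mem_toFinset]
  set ν : (Fin n → ℤ) → ℕ := fun c => (⌊L c / δ⌋).toNat with hν_def
  have hD : ∀ c g, c ≠ 0 → g ∈ D c → ν (c - g) < ν c := by
    intro c g _ hgD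
    obtain ⟨hg0, hg, hg'⟩ := (memD c g).mp hgD
    have hδg : δ ≤ L g := (hL g hg).2.1 hg0
    have h0 : 0 ≤ L (c - g) := (hL _ hg').1
    have hsum : L g + L (c - g) = L c := by rw [← hLadd]; congr 1; abel
    have h1 : (1 : ℤ) ≤ ⌊L c / δ⌋ := by
      rw [Int.le_floor]
      push_cast
      rw [le_div_iff₀ hδ]
      linarith
    have h2 : ⌊L (c - g) / δ⌋ ≤ ⌊L c / δ⌋ - 1 := by
      have : L (c - g) / δ ≤ L c / δ - 1 := by
        rw [div_sub' (ne_of_gt hδ), div_le_div_iff₀ hδ hδ]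
        nlinarith
      calc ⌊L (c - g) / δ⌋ ≤ ⌊L c / δ - 1⌋ := Int.floor_mono this
        _ = ⌊L c / δ⌋ - 1 := by exact_mod_cast Int.floor_sub_intCast (L c / δ) 1
    simp only [hν_def]
    omega
  set finv : (Fin n → ℤ) → k := invAux u f D ν hD with hfinv_def
  have finv0 : finv 0 = u := by rw [hfinv_def, invAux]; simp
  have finvEq : ∀ c, c ≠ 0 → finv c = -u * ∑ g ∈ D c, f g * finv (c - g) := by
    intro c hc
    rw [hfinv_def, invAux, dif_neg hc,
      Finset.sum_attach (D c) (fun g => f g * invAux u f D ν hD (c - g))]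
  have finvSupp : ∀ g, finv g ≠ 0 → InConeZ v g := by
    intro g hg
    by_cases hg0 : g = 0
    · rw [hg0]; exact cone0
    · rw [finvEq g hg0] at hg
      have : ∑ x ∈ D g, f x * finv (g - x) ≠ 0 := fun h => hg (by rw [h, mul_zero])
      obtain ⟨x, hx, -⟩ := Finset.exists_ne_zero_of_sum_ne_zero this
      obtain ⟨-, hxc, hxc'⟩ := (memD g x).mp hx
      have := coneAdd x (g - x) hxc hxc'
      simpa using this
  have D0 : D 0 = ∅ := by
    ext g
    simp only [memD, Finset.notMem_empty, iff_false]
    rintro ⟨hg0, hg, hg'⟩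
    exact hg0 (pointed g hg (by simpa using hg'))
  refine ⟨finv, finvSupp, fun c => ?_⟩
  -- the key finset of decompositions
  set t : Finset ((Fin n → ℤ) × (Fin n → ℤ)) :=
    (insert 0 (D c)).image (fun g => (g, c - g)) with ht_def
  have hfinsum : (∑ᶠ p ∈ {p : (Fin n → ℤ) × (Fin n → ℤ) | p.1 + p.2 = c}, f p.1 * finv p.2)
      = ∑ p ∈ t, f p.1 * finv p.2 := by
    apply finsum_mem_eq_sum_of_inter_support_eq
    ext p
    simp only [ht_def, Set.mem_inter_iff, Set.mem_setOf_eq, Function.mem_support, Finset.coe_image,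
      Set.mem_image, Finset.coe_insert, Set.mem_insert_iff, Finset.mem_coe]
    constructor
    · rintro ⟨hpc, hne⟩
      have hf1 : f p.1 ≠ 0 := fun h => hne (by rw [h, zero_mul])
      have hf2 : finv p.2 ≠ 0 := fun h => hne (by rw [h, mul_zero])
      have hc1 : InConeZ v p.1 := hf p.1 hf1
      have hc2 : InConeZ v p.2 := finvSupp p.2 hf2
      have hp2 : p.2 = c - p.1 := by rw [← hpc]; abel
      refine ⟨⟨p.1, ?_, ?_⟩, hne⟩
      · by_cases h1 : p.1 = 0
        · left; exact h1
        · right; exact (memD c p.1).mpr ⟨h1, hc1, hp2 ▸ hc2⟩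
      · rw [← hp2]
    · rintro ⟨⟨g, hg, hp⟩, hne⟩
      refine ⟨?_, hne⟩
      rw [← hp]
      simp
  rw [hfinsum, ht_def, Finset.sum_image (by intro g1 _ g2 _ h; exact (Prod.mk.injEq _ _ _ _).mp h |>.1),
    Finset.sum_insert (by simp [memD])]
  simp only [sub_zero]
  by_cases hc : c = 0
  · subst hc
    rw [D0]
    simp [finv0, hu]
  · rw [if_neg hc, finvEq c hc]
    rw [show f 0 * (-u * ∑ g ∈ D c, f g * finv (c - g))
        = -(f 0 * u) * ∑ g ∈ D c, f g * finv (c - g) by ring, hu]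
    ring
end

section
/- Let C be a locally Krull–Schmidt category. Then C has the cancellation property: for any objects A, B, C with A ⊕ B ≅ A ⊕ C, one has B ≅ C. -/
open CategoryTheory CategoryTheory.Limits

universe v u

section RingLemmas

variable {R : Type*} [Ring R]

lemma loc_idem_eq (hl : ∀ a : R, IsUnit a ∨ IsUnit (1 - a)) {e : R} (he : e * e = e) :
    e = 1 ∨ e = 0 := by
  rcases hl e with h | h
  · exact Or.inl (h.mul_left_cancel (by rw [he, mul_one]))
  · right
    have h2 : (1 - e) * (1 - e) = (1 - e) * 1 := by
      rw [sub_mul, one_mul, mul_sub, mul_one, he, mul_one]; abel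
    have h3 := h.mul_left_cancel h2
    have := sub_eq_self.mp (by rw [h3])
    exact this

lemma loc_unit_of_mul_left (hl : ∀ a : R, IsUnit a ∨ IsUnit (1 - a)) {x y : R}
    (h : IsUnit (x * y)) : IsUnit x := by
  obtain ⟨u, hu⟩ := h
  set y' := y * (↑u⁻¹ : R) with hy'
  have hxy' : x * y' = 1 := by
    rw [hy', ← mul_assoc, ← hu, u.mul_inv]
  have he : (y' * x) * (y' * x) = y' * x := by
    rw [mul_assoc, ← mul_assoc x, hxy', one_mul]
  rcases loc_idem_eq hl he with h1 | h0
  · exact ⟨⟨x, y', hxy', h1⟩, rfl⟩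
  · have h10 : (1 : R) = 0 := by
      calc (1 : R) = (x * y') * (x * y') := by rw [hxy', one_mul]
      _ = x * ((y' * x) * y') := by noncomm_ring
      _ = 0 := by rw [h0, zero_mul, mul_zero]
    have : Subsingleton R := subsingleton_of_zero_eq_one h10.symm
    exact isUnit_of_subsingleton x

lemma loc_unit_of_mul_right (hl : ∀ a : R, IsUnit a ∨ IsUnit (1 - a)) {x y : R}
    (h : IsUnit (x * y)) : IsUnit y := by
  obtain ⟨u, hu⟩ := h
  set x' := (↑u⁻¹ : R) * x with hx'
  have hxy' : x' * y = 1 := by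
    rw [hx', mul_assoc, ← hu, u.inv_mul]
  have he : (y * x') * (y * x') = y * x' := by
    rw [mul_assoc, ← mul_assoc x', hxy', one_mul]
  rcases loc_idem_eq hl he with h1 | h0
  · exact ⟨⟨y, x', h1, hxy'⟩, rfl⟩
  · have h10 : (1 : R) = 0 := by
      calc (1 : R) = (x' * y) * (x' * y) := by rw [hxy', one_mul]
      _ = x' * ((y * x') * y) := by noncomm_ring
      _ = 0 := by rw [h0, zero_mul, mul_zero]
    have : Subsingleton R := subsingleton_of_zero_eq_one h10.symm
    exact isUnit_of_subsingleton y

lemma loc_nonunit_add (hl : ∀ a : R, IsUnit a ∨ IsUnit (1 - a)) {a b : R}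
    (ha : ¬IsUnit a) (hb : ¬IsUnit b) : ¬IsUnit (a + b) := by
  intro h
  obtain ⟨u, hu⟩ := h
  have h1 : a * (↑u⁻¹ : R) + b * ↑u⁻¹ = 1 := by rw [← add_mul, ← hu, u.mul_inv]
  rcases hl (a * (↑u⁻¹ : R)) with hx | hx
  · exact ha (loc_unit_of_mul_left hl (x := a) (y := (↑u⁻¹ : R)) hx)
  · have : (1 : R) - a * ↑u⁻¹ = b * ↑u⁻¹ := by rw [← h1]; abel
    rw [this] at hx
    exact hb (loc_unit_of_mul_left hl hx)

lemma loc_finset_sum_nonunit [Nontrivial R] (hl : ∀ a : R, IsUnit a ∨ IsUnit (1 - a))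
    {ι : Type*} {s : Finset ι} {f : ι → R} (h : ∀ i ∈ s, ¬ IsUnit (f i)) :
    ¬ IsUnit (∑ i ∈ s, f i) := by
  classical
  induction s using Finset.cons_induction with
  | empty => simpa using not_isUnit_zero
  | cons a s ha ih =>
    rw [Finset.sum_cons]
    exact loc_nonunit_add hl (h a (Finset.mem_cons_self a s))
      (ih fun i hi => h i (Finset.mem_cons_of_mem hi))

variable [Nontrivial R]

/-- The congruence modulo the maximal ideal of nonunits. -/
def locCon (hl : ∀ a : R, IsUnit a ∨ IsUnit (1 - a)) : RingCon R where
  r a b := ¬ IsUnit (a - b)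
  iseqv := by
    refine ⟨fun a => by simp [not_isUnit_zero], fun {a b} h => ?_, fun {a b c} h1 h2 => ?_⟩
    · intro hu
      exact h (by simpa [neg_sub] using hu.neg)
    · have := loc_nonunit_add hl h1 h2
      rwa [sub_add_sub_cancel] at this
  add' := by
    intro a b cc d h1 h2
    show ¬ IsUnit (a + cc - (b + d))
    have := loc_nonunit_add hl (show ¬ IsUnit (a - b) from h1) (show ¬ IsUnit (cc - d) from h2)
    rw [add_sub_add_comm]; exact this
  mul' := by
    intro w x y z h1 h2
    have hA : ¬ IsUnit (w * (y - z)) := fun hu => h2 (loc_unit_of_mul_right hl hu)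
    have hB : ¬ IsUnit ((w - x) * z) := fun hu => h1 (loc_unit_of_mul_left hl hu)
    have := loc_nonunit_add hl hA hB
    have heq : w * (y - z) + (w - x) * z = w * y - x * z := by noncomm_ring
    rwa [heq] at this

lemma locCon_eq_iff (hl : ∀ a : R, IsUnit a ∨ IsUnit (1 - a)) {a b : R} :
    (a : (locCon hl).Quotient) = b ↔ ¬ IsUnit (a - b) :=
  RingCon.eq _

lemma locCon_isUnit_or_eq_zero (hl : ∀ a : R, IsUnit a ∨ IsUnit (1 - a))
    (x : (locCon hl).Quotient) : IsUnit x ∨ x = 0 := by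
  obtain ⟨a, rfl⟩ := Quot.exists_rep x
  change IsUnit ((a : (locCon hl).Quotient)) ∨ ((a : (locCon hl).Quotient) = 0)
  by_cases h : IsUnit a
  · exact Or.inl (h.map (locCon hl).mk')
  · right
    rw [show (0 : (locCon hl).Quotient) = ((0 : R) : (locCon hl).Quotient) from
      (RingCon.coe_zero _).symm, locCon_eq_iff hl]
    simpa using h

instance locCon_nontrivial (hl : ∀ a : R, IsUnit a ∨ IsUnit (1 - a)) :
    Nontrivial (locCon hl).Quotient := by
  have : ((1 : R) : (locCon hl).Quotient) ≠ ((0 : R) : (locCon hl).Quotient) := by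
    intro hh
    rw [locCon_eq_iff hl] at hh
    exact hh (by simp)
  exact ⟨_, _, this⟩

end RingLemmas

variable {C : Type u} [Category.{v} C]

/-- A cofan is a biproduct if the canonical map `Hom(Z, ∐ᵢ Yᵢ) → ∏ᵢ Hom(Z, Yᵢ)`
induced by the projections is bijective. -/
def IsLocBiproduct [HasZeroMorphisms C] {I : Type v} {Y : I → C}
    (c : Cofan Y) (p : ∀ i, c.pt ⟶ Y i) : Prop :=
  (∀ i, c.inj i ≫ p i = 𝟙 (Y i)) ∧ (∀ i j, i ≠ j → c.inj i ≫ p j = 0) ∧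
    ∀ Z : C, Function.Bijective (fun (φ : Z ⟶ c.pt) => (fun i => φ ≫ p i : ∀ i, Z ⟶ Y i))

/-- An object is compact if every morphism into a coproduct factors through a finite
subcoproduct. -/
def IsCompactObj [Preadditive C] (X : C) : Prop :=
  ∀ (J : Type v) (Z : J → C) (c : Cofan Z), IsColimit c →
    ∀ f : X ⟶ c.pt, ∃ (s : Finset J) (g : ∀ j, X ⟶ Z j),
      f = ∑ j ∈ s, g j ≫ c.inj j

/-- Local endomorphism ring: every endomorphism `g` has `g` or `𝟙 - g` invertible. -/
def LocalEndo [Preadditive C] (X : C) : Prop :=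
  ∀ g : X ⟶ X, IsIso g ∨ IsIso (𝟙 X - g)

/-- A locally Krull–Schmidt category: every object decomposes as a locally finite
direct sum (an infinite biproduct) of compact objects with local endomorphism rings,
each isomorphism class occurring with finite multiplicity. -/
def LocallyKrullSchmidt (C : Type u) [Category.{v} C] [Preadditive C] : Prop :=
  ∀ X : C, ∃ (I : Type v) (Y : I → C) (c : Cofan Y) (p : ∀ i, c.pt ⟶ Y i)
    (_ : IsColimit c), IsLocBiproduct c p ∧ Nonempty (c.pt ≅ X) ∧
      (∀ i, IsCompactObj (Y i)) ∧ (∀ i, LocalEndo (Y i)) ∧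
      (∀ i, {j | Nonempty (Y j ≅ Y i)}.Finite)

section CatLemmas

variable [Preadditive C]

lemma localEndo_isUnit_or {X : C} (hX : LocalEndo X) :
    ∀ a : End X, IsUnit a ∨ IsUnit (1 - a) := by
  intro a
  rcases hX a with h | h
  · exact Or.inl ((isUnit_iff_isIso a).mpr h)
  · exact Or.inr ((isUnit_iff_isIso _).mpr h)

lemma retract_nonempty_iso {X Z : C} (hX : 𝟙 X ≠ 0) (hZ : LocalEndo Z)
    (u : X ⟶ Z) (v : Z ⟶ X) (huv : IsIso (u ≫ v)) : Nonempty (X ≅ Z) := by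
  set w : X ⟶ X := inv (u ≫ v) with hw
  have huvw : u ≫ v ≫ w = 𝟙 X := by rw [hw, ← Category.assoc]; exact IsIso.hom_inv_id _
  rcases hZ (v ≫ w ≫ u) with he | he
  · have hee : (v ≫ w ≫ u) ≫ (v ≫ w ≫ u) = (v ≫ w ≫ u) ≫ 𝟙 Z := by
      simp only [Category.comp_id, Category.assoc]
      rw [← Category.assoc u v, ← Category.assoc (u ≫ v) w, IsIso.hom_inv_id, Category.id_comp]
    have heq : v ≫ w ≫ u = 𝟙 Z := by
      rwa [cancel_epi (v ≫ w ≫ u)] at hee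
    exact ⟨⟨u, v ≫ w, by rw [← Category.assoc] at huvw ⊢; exact huvw, by
      rw [Category.assoc]; exact heq⟩⟩
  · have hee : (v ≫ w ≫ u) ≫ (v ≫ w ≫ u) = (v ≫ w ≫ u) := by
      simp only [Category.assoc]
      rw [← Category.assoc u v, ← Category.assoc (u ≫ v) w, IsIso.hom_inv_id, Category.id_comp]
    have h1e : (𝟙 Z - v ≫ w ≫ u) ≫ (𝟙 Z - v ≫ w ≫ u) = (𝟙 Z - v ≫ w ≫ u) ≫ 𝟙 Z := by
      simp only [Preadditive.sub_comp, Preadditive.comp_sub, Category.comp_id,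
        Category.id_comp, hee]
      abel
    have heq : 𝟙 Z - v ≫ w ≫ u = 𝟙 Z := by
      rwa [cancel_epi (𝟙 Z - v ≫ w ≫ u)] at h1e
    have he0 : v ≫ w ≫ u = 0 := sub_eq_self.mp heq
    exfalso
    apply hX
    calc 𝟙 X = (u ≫ v ≫ w) ≫ (u ≫ v ≫ w) := by rw [huvw, Category.comp_id]
    _ = u ≫ (v ≫ w ≫ u) ≫ v ≫ w := by simp only [Category.assoc]
    _ = 0 := by rw [he0, Limits.zero_comp, Limits.comp_zero]

lemma comp_nonunit {X Z : C} (hX : 𝟙 X ≠ 0) (hZ : LocalEndo Z) (hne : ¬ Nonempty (X ≅ Z))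
    (u : X ⟶ Z) (v : Z ⟶ X) : ¬ IsUnit (show End X from u ≫ v) := by
  intro h
  have : IsIso (u ≫ v) := (isUnit_iff_isIso (show End X from u ≫ v)).mp h
  exact hne (retract_nonempty_iso hX hZ u v this)

/-- The error term of truncating a map through a locally finite biproduct
to the indices isomorphic to `X` is a nonunit. -/
lemma error_nonunit {K : Type v} {Z : K → C} (d : Cofan Z) (q : ∀ k, d.pt ⟶ Z k)
    (hd : IsColimit d) (hdb : IsLocBiproduct d q) (hZl : ∀ k, LocalEndo (Z k))
    {X : C} (hXl : LocalEndo X) (hX : 𝟙 X ≠ 0) (hXc : IsCompactObj X)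
    (T : Finset K) (hT : ∀ k, k ∉ T → ¬ Nonempty (Z k ≅ X))
    (f : X ⟶ d.pt) (w : d.pt ⟶ X) :
    ¬ IsUnit (show End X from f ≫ w - ∑ k ∈ T, (f ≫ q k) ≫ (d.inj k ≫ w)) := by
  classical
  obtain ⟨u, g, hf⟩ := hXc K Z d hd f
  have hfq : ∀ k, f ≫ q k = if k ∈ u then g k else 0 := by
    intro k
    rw [hf, Preadditive.sum_comp]
    have hterm : ∀ k' ∈ u, (g k' ≫ d.inj k') ≫ q k = if k' = k then g k else 0 := by
      intro k' _
      by_cases hkk : k' = k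
      · subst hkk; rw [if_pos rfl, Category.assoc, hdb.1 k', Category.comp_id]
      · rw [if_neg hkk, Category.assoc, hdb.2.1 k' k hkk, Limits.comp_zero]
    rw [Finset.sum_congr rfl hterm, Finset.sum_ite_eq' u k (fun _ => g k)]
  have hsum : (∑ k ∈ T, (f ≫ q k) ≫ (d.inj k ≫ w)) = ∑ k ∈ T ∩ u, g k ≫ (d.inj k ≫ w) := by
    have : ∀ k ∈ T, (f ≫ q k) ≫ (d.inj k ≫ w)
        = if k ∈ u then g k ≫ (d.inj k ≫ w) else 0 := by
      intro k _
      rw [hfq k]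
      by_cases hk : k ∈ u
      · rw [if_pos hk, if_pos hk]
      · rw [if_neg hk, if_neg hk, Limits.zero_comp]
    rw [Finset.sum_congr rfl this, Finset.sum_ite_mem]
  have hfw : (f ≫ w - ∑ k ∈ T, (f ≫ q k) ≫ (d.inj k ≫ w))
      = ∑ k ∈ u \ T, g k ≫ (d.inj k ≫ w) := by
    rw [hsum, Finset.inter_comm, ← Finset.sdiff_inter_self_left u T,
      Finset.sum_sdiff_eq_sub (Finset.inter_subset_left)]
    congr 1
    rw [hf, Preadditive.sum_comp]
    exact Finset.sum_congr rfl (fun k _ => Category.assoc _ _ _)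
  haveI : Nontrivial (End X) := ⟨𝟙 X, 0, hX⟩
  rw [show (show End X from f ≫ w - ∑ k ∈ T, (f ≫ q k) ≫ (d.inj k ≫ w))
    = (show End X from ∑ k ∈ u \ T, g k ≫ (d.inj k ≫ w)) from hfw]
  exact loc_finset_sum_nonunit (localEndo_isUnit_or hXl)
    (fun k hk => comp_nonunit hX (hZl k) (fun hni => hT k (Finset.mem_sdiff.mp hk).2 ⟨hni.some.symm⟩) (g k) (d.inj k ≫ w))


lemma ringCon_coe_sum {R : Type*} [Ring R] (cn : RingCon R) {ι : Type*} (s : Finset ι)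
    (f : ι → R) : ((∑ i ∈ s, f i : R) : cn.Quotient) = ∑ i ∈ s, ((f i : R) : cn.Quotient) :=
  map_sum cn.mk' f s

lemma locCon_coe_eq_of {R : Type*} [Ring R] [Nontrivial R]
    (hl : ∀ a : R, IsUnit a ∨ IsUnit (1 - a)) {a b : R} (h : ¬ IsUnit (b - a)) :
    ((a : (locCon hl).Quotient)) = b := by
  rw [locCon_eq_iff]
  intro hu
  exact h (by simpa [neg_sub] using hu.neg)

lemma mult_invariance {I K : Type v} {Y : I → C} {Z : K → C}
    (c : Cofan Y) (p : ∀ i, c.pt ⟶ Y i) (hc : IsColimit c) (hcb : IsLocBiproduct c p)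
    (d : Cofan Z) (q : ∀ k, d.pt ⟶ Z k) (hd : IsColimit d) (hdb : IsLocBiproduct d q)
    (hYl : ∀ i, LocalEndo (Y i)) (hZl : ∀ k, LocalEndo (Z k))
    {X : C} (hXl : LocalEndo X) (hX : 𝟙 X ≠ 0) (hXc : IsCompactObj X)
    (hS : {i | Nonempty (Y i ≅ X)}.Finite) (hT : {k | Nonempty (Z k ≅ X)}.Finite)
    (φ : c.pt ≅ d.pt) :
    Nat.card {i | Nonempty (Y i ≅ X)} = Nat.card {k | Nonempty (Z k ≅ X)} := by
  classical
  haveI : Nontrivial (End X) := ⟨𝟙 X, 0, hX⟩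
  have hl := localEndo_isUnit_or hXl
  set con := locCon hl with hcon
  haveI : InvariantBasisNumber con.Quotient := by
    letI := DivisionRing.ofIsUnitOrEqZero (locCon_isUnit_or_eq_zero hl)
    exact inferInstance
  set Sfin := hS.toFinset with hSfin
  set Tfin := hT.toFinset with hTfin
  have σsel : ∀ i : ↥Sfin, Nonempty (Y (i : I) ≅ X) := fun i => hS.mem_toFinset.mp i.2
  have τsel : ∀ k : ↥Tfin, Nonempty (Z (k : K) ≅ X) := fun k => hT.mem_toFinset.mp k.2
  set σ : ∀ i : ↥Sfin, Y (i : I) ≅ X := fun i => (σsel i).some with hσ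
  set τ : ∀ k : ↥Tfin, Z (k : K) ≅ X := fun k => (τsel k).some with hτ
  set r : ↥Sfin → ↥Tfin → End X :=
    fun i k => (σ i).inv ≫ c.inj (i : I) ≫ φ.hom ≫ q (k : K) ≫ (τ k).hom with hr
  set s' : ↥Tfin → ↥Sfin → End X :=
    fun k j => (τ k).inv ≫ d.inj (k : K) ≫ φ.inv ≫ p (j : I) ≫ (σ j).hom with hs'
  set A : Matrix ↥Tfin ↥Sfin con.Quotient := fun k i => ((r i k : End X) : con.Quotient) with hA
  set B : Matrix ↥Sfin ↥Tfin con.Quotient := fun j k => ((s' k j : End X) : con.Quotient) with hB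
  have hBA : B * A = 1 := by
    ext j i
    rw [Matrix.mul_apply]
    have e1 : ∀ k : ↥Tfin, B j k * A k i = ((r i k ≫ s' k j : End X) : con.Quotient) := by
      intro k
      rw [hA, hB, ← RingCon.coe_mul]
      rfl
    rw [Finset.sum_congr rfl (fun k _ => e1 k), ← ringCon_coe_sum con Finset.univ (fun k => (r i k ≫ s' k j : End X))]
    set f : X ⟶ d.pt := (σ i).inv ≫ c.inj (i : I) ≫ φ.hom with hf
    set w : d.pt ⟶ X := φ.inv ≫ p (j : I) ≫ (σ j).hom with hw
    have hterm : ∀ k : ↥Tfin, (r i k ≫ s' k j : End X) = (f ≫ q (k : K)) ≫ (d.inj (k : K) ≫ w) := by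
      intro k
      rw [hr, hs', hf, hw]
      simp only [Category.assoc, Iso.hom_inv_id_assoc]
    have hsum2 : (∑ k : ↥Tfin, (r i k ≫ s' k j : End X))
        = ∑ k ∈ Tfin, (f ≫ q k) ≫ (d.inj k ≫ w) := by
      rw [Finset.sum_congr rfl (fun k _ => hterm k)]
      exact Finset.sum_coe_sort Tfin (fun k => (f ≫ q k) ≫ (d.inj k ≫ w))
    have hδ : (f ≫ w : End X) = (if j = i then (1 : End X) else 0) := by
      have h1 : (f ≫ w : End X) = (σ i).inv ≫ (c.inj (i : I) ≫ p (j : I)) ≫ (σ j).hom := by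
        rw [hf, hw]
        simp only [Category.assoc, Iso.hom_inv_id_assoc]
      by_cases hij : j = i
      · rw [if_pos hij, h1, hij, hcb.1, Category.id_comp, Iso.inv_hom_id]
        rfl
      · rw [if_neg hij, h1, hcb.2.1 (i : I) (j : I) (fun hh => hij (Subtype.ext hh.symm)),
          Limits.zero_comp, Limits.comp_zero]
    have hmain : ((∑ k : ↥Tfin, (r i k ≫ s' k j : End X) : End X) : con.Quotient)
        = ((f ≫ w : End X) : con.Quotient) := by
      apply locCon_coe_eq_of
      rw [hsum2]
      exact error_nonunit d q hd hdb hZl hXl hX hXc Tfin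
        (fun k hk => fun hni => hk (hT.mem_toFinset.mpr hni)) f w
    rw [hmain, hδ, Matrix.one_apply]
    by_cases hij : j = i
    · rw [if_pos hij, if_pos hij]
      exact RingCon.coe_one con
    · rw [if_neg hij, if_neg hij]
      exact RingCon.coe_zero con
  have hAB : A * B = 1 := by
    ext k l
    rw [Matrix.mul_apply]
    have e1 : ∀ i : ↥Sfin, A k i * B i l = ((s' l i ≫ r i k : End X) : con.Quotient) := by
      intro i
      rw [hA, hB, ← RingCon.coe_mul]
      rfl
    rw [Finset.sum_congr rfl (fun i _ => e1 i), ← ringCon_coe_sum con Finset.univ (fun i => (s' l i ≫ r i k : End X))]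
    set f : X ⟶ c.pt := (τ l).inv ≫ d.inj (l : K) ≫ φ.inv with hf
    set w : c.pt ⟶ X := φ.hom ≫ q (k : K) ≫ (τ k).hom with hw
    have hterm : ∀ i : ↥Sfin, (s' l i ≫ r i k : End X) = (f ≫ p (i : I)) ≫ (c.inj (i : I) ≫ w) := by
      intro i
      rw [hr, hs', hf, hw]
      simp only [Category.assoc, Iso.hom_inv_id_assoc]
    have hsum2 : (∑ i : ↥Sfin, (s' l i ≫ r i k : End X))
        = ∑ i ∈ Sfin, (f ≫ p i) ≫ (c.inj i ≫ w) := by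
      rw [Finset.sum_congr rfl (fun i _ => hterm i)]
      exact Finset.sum_coe_sort Sfin (fun i => (f ≫ p i) ≫ (c.inj i ≫ w))
    have hδ : (f ≫ w : End X) = (if k = l then (1 : End X) else 0) := by
      have h1 : (f ≫ w : End X) = (τ l).inv ≫ (d.inj (l : K) ≫ q (k : K)) ≫ (τ k).hom := by
        rw [hf, hw]
        simp only [Category.assoc, Iso.inv_hom_id_assoc]
      by_cases hkl : k = l
      · rw [if_pos hkl, h1, hkl, hdb.1, Category.id_comp, Iso.inv_hom_id]
        rfl
      · rw [if_neg hkl, h1, hdb.2.1 (l : K) (k : K) (fun hh => hkl (Subtype.ext hh.symm)),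
          Limits.zero_comp, Limits.comp_zero]
    have hmain : ((∑ i : ↥Sfin, (s' l i ≫ r i k : End X) : End X) : con.Quotient)
        = ((f ≫ w : End X) : con.Quotient) := by
      apply locCon_coe_eq_of
      rw [hsum2]
      exact error_nonunit c p hc hcb hYl hXl hX hXc Sfin
        (fun i hi => fun hni => hi (hS.mem_toFinset.mpr hni)) f w
    rw [hmain, hδ, Matrix.one_apply]
    by_cases hkl : k = l
    · rw [if_pos hkl, if_pos hkl]
      exact RingCon.coe_one con
    · rw [if_neg hkl, if_neg hkl]
      exact RingCon.coe_zero con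
  have hcard : Fintype.card ↥Tfin = Fintype.card ↥Sfin :=
    Matrix.square_of_invertible A B hAB hBA
  calc Nat.card {i | Nonempty (Y i ≅ X)}
      = Nat.card ↥Sfin := Nat.card_congr
        (Equiv.subtypeEquivRight (fun i => (hS.mem_toFinset (a := i)).symm))
    _ = Fintype.card ↥Sfin := Nat.card_eq_fintype_card
    _ = Fintype.card ↥Tfin := hcard.symm
    _ = Nat.card ↥Tfin := Nat.card_eq_fintype_card.symm
    _ = Nat.card {k | Nonempty (Z k ≅ X)} := Nat.card_congr
        (Equiv.subtypeEquivRight (fun k => hT.mem_toFinset (a := k)))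

end CatLemmas

section Comb

variable [Preadditive C]

/-- The set of indices isomorphic to any object is finite, given finite multiplicities. -/
lemma class_finite {I : Type v} {Y : I → C}
    (hfin : ∀ i, {j | Nonempty (Y j ≅ Y i)}.Finite) (X : C) :
    {i | Nonempty (Y i ≅ X)}.Finite := by
  by_cases hne : ∃ i0, Nonempty (Y i0 ≅ X)
  · obtain ⟨i0, ⟨e0⟩⟩ := hne
    refine (hfin i0).subset ?_
    rintro i ⟨ei⟩
    exact ⟨ei.trans e0.symm⟩
  · convert Set.finite_empty
    rw [Set.eq_empty_iff_forall_notMem]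
    intro i hi
    exact hne ⟨i, hi⟩

/-- Sum decomposition of a subtype over a sum type. -/
def sumSubtypeEquiv {α β : Type*} (P : α ⊕ β → Prop) :
    {x // P x} ≃ {a // P (Sum.inl a)} ⊕ {b // P (Sum.inr b)} where
  toFun x := match x with
    | ⟨.inl a, h⟩ => .inl ⟨a, h⟩
    | ⟨.inr b, h⟩ => .inr ⟨b, h⟩
  invFun y := match y with
    | .inl ⟨a, h⟩ => ⟨.inl a, h⟩
    | .inr ⟨b, h⟩ => ⟨.inr b, h⟩
  left_inv := by rintro ⟨a | b, h⟩ <;> rfl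
  right_inv := by rintro (⟨a, h⟩ | ⟨b, h⟩) <;> rfl

variable [HasBinaryBiproducts C]
variable {I J : Type v} {Y : I → C} {Y' : J → C}

/-- Combined cofan on a sum type. -/
noncomputable def combCofan (c : Cofan Y) (c' : Cofan Y') : Cofan (Sum.elim Y Y') :=
  Cofan.mk (c.pt ⊞ c'.pt)
    (fun i => match i with
      | .inl a => c.inj a ≫ biprod.inl
      | .inr b => c'.inj b ≫ biprod.inr)

/-- Combined projections. -/
noncomputable def combProj (c : Cofan Y) (c' : Cofan Y') (p : ∀ i, c.pt ⟶ Y i) (p' : ∀ j, c'.pt ⟶ Y' j) :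
    ∀ i, (combCofan c c').pt ⟶ Sum.elim Y Y' i :=
  fun i => match i with
    | .inl a => biprod.fst ≫ p a
    | .inr b => biprod.snd ≫ p' b

noncomputable def combCofan_isColimit (c : Cofan Y) (c' : Cofan Y') (hc : IsColimit c)
    (hc' : IsColimit c') : IsColimit (combCofan c c') := by
  refine mkCofanColimit _
    (fun t => biprod.desc (hc.desc (Cofan.mk t.pt fun a => t.inj (Sum.inl a)))
      (hc'.desc (Cofan.mk t.pt fun b => t.inj (Sum.inr b)))) ?_ ?_
  · intro t j
    rcases j with a | b
    · show (c.inj a ≫ biprod.inl) ≫ _ = _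
      rw [Category.assoc, biprod.inl_desc]
      exact hc.fac (Cofan.mk t.pt fun a => t.inj (Sum.inl a)) ⟨a⟩
    · show (c'.inj b ≫ biprod.inr) ≫ _ = _
      rw [Category.assoc, biprod.inr_desc]
      exact hc'.fac (Cofan.mk t.pt fun b => t.inj (Sum.inr b)) ⟨b⟩
  · intro t m hm
    refine biprod.hom_ext' _ _ ?_ ?_
    · rw [biprod.inl_desc]
      refine hc.uniq (Cofan.mk t.pt fun a => t.inj (Sum.inl a)) _ (fun ⟨a⟩ => ?_)
      show c.inj a ≫ biprod.inl ≫ m = t.inj (Sum.inl a)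
      refine (Category.assoc _ _ _).symm.trans ?_
      exact hm (Sum.inl a)
    · rw [biprod.inr_desc]
      refine hc'.uniq (Cofan.mk t.pt fun b => t.inj (Sum.inr b)) _ (fun ⟨b⟩ => ?_)
      show c'.inj b ≫ biprod.inr ≫ m = t.inj (Sum.inr b)
      refine (Category.assoc _ _ _).symm.trans ?_
      exact hm (Sum.inr b)

lemma combCofan_isLocBiproduct (c : Cofan Y) (c' : Cofan Y')
    (p : ∀ i, c.pt ⟶ Y i) (p' : ∀ j, c'.pt ⟶ Y' j)
    (hb : IsLocBiproduct c p) (hb' : IsLocBiproduct c' p') :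
    IsLocBiproduct (combCofan c c') (combProj c c' p p') := by
  refine ⟨?_, ?_, ?_⟩
  · rintro (a | b)
    · show (c.inj a ≫ biprod.inl) ≫ (biprod.fst ≫ p a) = _
      rw [Category.assoc, biprod.inl_fst_assoc]
      exact hb.1 a
    · show (c'.inj b ≫ biprod.inr) ≫ (biprod.snd ≫ p' b) = _
      rw [Category.assoc, biprod.inr_snd_assoc]
      exact hb'.1 b
  · rintro (a | b) (a' | b') hne
    · show (c.inj a ≫ biprod.inl) ≫ (biprod.fst ≫ p a') = 0
      rw [Category.assoc, biprod.inl_fst_assoc]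
      exact hb.2.1 a a' (fun hh => hne (congrArg Sum.inl hh))
    · show (c.inj a ≫ biprod.inl) ≫ (biprod.snd ≫ p' b') = 0
      rw [Category.assoc, biprod.inl_snd_assoc]
      rw [Limits.zero_comp, Limits.comp_zero]
    · show (c'.inj b ≫ biprod.inr) ≫ (biprod.fst ≫ p a') = 0
      rw [Category.assoc, biprod.inr_fst_assoc]
      rw [Limits.zero_comp, Limits.comp_zero]
    · show (c'.inj b ≫ biprod.inr) ≫ (biprod.snd ≫ p' b') = 0
      rw [Category.assoc, biprod.inr_snd_assoc]
      exact hb'.2.1 b b' (fun hh => hne (congrArg Sum.inr hh))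
  · intro W
    constructor
    · intro φ φ' hφ
      have h1 : ∀ a, (φ ≫ biprod.fst) ≫ p a = (φ' ≫ biprod.fst) ≫ p a := by
        intro a
        have := congrFun hφ (Sum.inl a)
        have h' : φ ≫ biprod.fst ≫ p a = φ' ≫ biprod.fst ≫ p a := by
          simpa [combProj, Category.assoc] using this
        exact (Category.assoc _ _ _).trans (h'.trans (Category.assoc _ _ _).symm)
      have h2 : ∀ b, (φ ≫ biprod.snd) ≫ p' b = (φ' ≫ biprod.snd) ≫ p' b := by
        intro b
        have := congrFun hφ (Sum.inr b)
        have h' : φ ≫ biprod.snd ≫ p' b = φ' ≫ biprod.snd ≫ p' b := by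
          simpa [combProj, Category.assoc] using this
        exact (Category.assoc _ _ _).trans (h'.trans (Category.assoc _ _ _).symm)
      have e1 : φ ≫ biprod.fst = φ' ≫ biprod.fst := (hb.2.2 W).1 (funext h1)
      have e2 : φ ≫ biprod.snd = φ' ≫ biprod.snd := (hb'.2.2 W).1 (funext h2)
      exact biprod.hom_ext _ _ e1 e2
    · intro ψ
      obtain ⟨φ1, h1⟩ := (hb.2.2 W).2 (fun a => ψ (Sum.inl a))
      obtain ⟨φ2, h2⟩ := (hb'.2.2 W).2 (fun b => ψ (Sum.inr b))
      refine ⟨biprod.lift φ1 φ2, funext ?_⟩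
      rintro (a | b)
      · show biprod.lift φ1 φ2 ≫ (biprod.fst ≫ p a) = ψ (Sum.inl a)
        rw [← Category.assoc, biprod.lift_fst]
        exact congrFun h1 a
      · show biprod.lift φ1 φ2 ≫ (biprod.snd ≫ p' b) = ψ (Sum.inr b)
        rw [← Category.assoc, biprod.lift_snd]
        exact congrFun h2 b

end Comb

section Restrict

variable [Preadditive C] {I : Type v} {Y : I → C}

/-- Restriction of a cofan to the nonzero summands. -/
def restrictCofan (c : Cofan Y) : Cofan (fun i : {i : I // 𝟙 (Y i) ≠ 0} => Y (i : I)) :=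
  Cofan.mk c.pt (fun i => c.inj (i : I))

noncomputable def restrictCofan_isColimit (c : Cofan Y) (hc : IsColimit c) :
    IsColimit (restrictCofan c) := by
  classical
  refine mkCofanColimit _
    (fun t => hc.desc (Cofan.mk t.pt
      (fun i => if h : 𝟙 (Y i) ≠ 0 then t.inj ⟨i, h⟩ else 0))) ?_ ?_
  · intro t i
    show c.inj (i : I) ≫ _ = _
    have := hc.fac (Cofan.mk t.pt
      (fun i => if h : 𝟙 (Y i) ≠ 0 then t.inj ⟨i, h⟩ else 0)) ⟨(i : I)⟩
    rw [show (c.ι.app ⟨(i : I)⟩) = c.inj (i : I) from rfl] at this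
    rw [this]
    show (if h : 𝟙 (Y (i : I)) ≠ 0 then t.inj ⟨(i : I), h⟩ else 0) = t.inj i
    rw [dif_pos i.2]
  · intro t m hm
    refine hc.uniq (Cofan.mk t.pt
      (fun i => if h : 𝟙 (Y i) ≠ 0 then t.inj ⟨i, h⟩ else 0)) m (fun ⟨j⟩ => ?_)
    show c.inj j ≫ m = (if h : 𝟙 (Y j) ≠ 0 then t.inj ⟨j, h⟩ else 0)
    by_cases h : 𝟙 (Y j) ≠ 0
    · rw [dif_pos h]
      exact hm ⟨j, h⟩
    · rw [dif_neg h]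
      have hz : c.inj j = 0 := by
        rw [← Category.id_comp (c.inj j), not_ne_iff.mp h, Limits.zero_comp]
      rw [hz]
      exact Limits.zero_comp

end Restrict

section Reindex

lemma reindex_iso {I K : Type v} {Y : I → C} {Z : K → C} (c : Cofan Y) (hc : IsColimit c)
    (d : Cofan Z) (hd : IsColimit d) (σ : I ≃ K) (τ : ∀ i, Y i ≅ Z (σ i)) :
    Nonempty (c.pt ≅ d.pt) := by
  haveI : HasCoproduct Y := HasColimit.mk ⟨c, hc⟩
  haveI : HasCoproduct Z := HasColimit.mk ⟨d, hd⟩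
  exact ⟨(hc.coconePointUniqueUpToIso (colimit.isColimit _)).trans
    ((Sigma.whiskerEquiv σ (fun i => (τ i).symm)).trans
      ((colimit.isColimit _).coconePointUniqueUpToIso hd))⟩

end Reindex

lemma id_ne_zero_of_iso [Preadditive C] {P Q : C} (e : P ≅ Q) (hq : 𝟙 Q ≠ 0) : 𝟙 P ≠ 0 := by
  intro h0
  apply hq
  calc 𝟙 Q = e.inv ≫ 𝟙 P ≫ e.hom := by simp
  _ = 0 := by rw [h0, Limits.zero_comp, Limits.comp_zero]

/-- a locally Krull–Schmidt category has the cancellation property: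
`A ⊕ B ≅ A ⊕ C` implies `B ≅ C`. -/
theorem stmt_7 [Preadditive C] [HasBinaryBiproducts C]
    (h : LocallyKrullSchmidt C) (A B B' : C)
    (e : Nonempty (A ⊞ B ≅ A ⊞ B')) :
    Nonempty (B ≅ B') := by
  classical
  obtain ⟨φ0⟩ := e
  obtain ⟨IA, YA, cA, pA, hcA, hbA, ⟨eA⟩, hcompA, hlocA, hfinA⟩ := h A
  obtain ⟨IB, YB, cB, pB, hcB, hbB, ⟨eB⟩, hcompB, hlocB, hfinB⟩ := h B
  obtain ⟨IB', YB', cB', pB', hcB', hbB', ⟨eB'⟩, hcompB', hlocB', hfinB'⟩ := h B'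
  have hc1 := combCofan_isColimit cA cB hcA hcB
  have hb1 := combCofan_isLocBiproduct cA cB pA pB hbA hbB
  have hc2 := combCofan_isColimit cA cB' hcA hcB'
  have hb2 := combCofan_isLocBiproduct cA cB' pA pB' hbA hbB'
  have hloc1 : ∀ i, LocalEndo (Sum.elim YA YB i) := by
    rintro (a | b)
    exacts [hlocA a, hlocB b]
  have hloc2 : ∀ i, LocalEndo (Sum.elim YA YB' i) := by
    rintro (a | b)
    exacts [hlocA a, hlocB' b]
  have φ : (combCofan cA cB).pt ≅ (combCofan cA cB').pt :=
    (biprod.mapIso eA eB).trans (φ0.trans (biprod.mapIso eA eB').symm)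
  -- the key counting fact
  have key : ∀ (X : C), LocalEndo X → 𝟙 X ≠ 0 → IsCompactObj X →
      Nat.card {j : IB | Nonempty (YB j ≅ X)}
        = Nat.card {k : IB' | Nonempty (YB' k ≅ X)} := by
    intro X hXl hX hXc
    have hSA : {a : IA | Nonempty (YA a ≅ X)}.Finite := class_finite hfinA X
    have hSB : {b : IB | Nonempty (YB b ≅ X)}.Finite := class_finite hfinB X
    have hSB' : {k : IB' | Nonempty (YB' k ≅ X)}.Finite := class_finite hfinB' X
    haveI := hSA.to_subtype
    haveI := hSB.to_subtype
    haveI := hSB'.to_subtype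
    have e1 : {i : IA ⊕ IB | Nonempty (Sum.elim YA YB i ≅ X)}
        ≃ {a : IA | Nonempty (YA a ≅ X)} ⊕ {b : IB | Nonempty (YB b ≅ X)} :=
      sumSubtypeEquiv _
    have e2 : {i : IA ⊕ IB' | Nonempty (Sum.elim YA YB' i ≅ X)}
        ≃ {a : IA | Nonempty (YA a ≅ X)} ⊕ {k : IB' | Nonempty (YB' k ≅ X)} :=
      sumSubtypeEquiv _
    haveI : Finite ↥{i : IA ⊕ IB | Nonempty (Sum.elim YA YB i ≅ X)} :=
      Finite.of_equiv _ e1.symm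
    haveI : Finite ↥{i : IA ⊕ IB' | Nonempty (Sum.elim YA YB' i ≅ X)} :=
      Finite.of_equiv _ e2.symm
    have hS1 : {i : IA ⊕ IB | Nonempty (Sum.elim YA YB i ≅ X)}.Finite := Set.toFinite _
    have hS2 : {i : IA ⊕ IB' | Nonempty (Sum.elim YA YB' i ≅ X)}.Finite := Set.toFinite _
    have hmain := mult_invariance (combCofan cA cB) (combProj cA cB pA pB) hc1 hb1
      (combCofan cA cB') (combProj cA cB' pA pB') hc2 hb2 hloc1 hloc2 hXl hX hXc hS1 hS2 φ
    rw [Nat.card_congr e1, Nat.card_congr e2, Nat.card_sum, Nat.card_sum] at hmain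
    exact Nat.add_left_cancel hmain
  -- build the bijection between nonzero indices
  have hXprops : ∀ j0 : IB, 𝟙 (YB j0) ≠ 0 →
      Nat.card {j : IB | Nonempty (YB j ≅ YB j0)}
        = Nat.card {k : IB' | Nonempty (YB' k ≅ YB j0)} :=
    fun j0 hj0 => key (YB j0) (hlocB j0) hj0 (hcompB j0)
  have hXprops' : ∀ k0 : IB', 𝟙 (YB' k0) ≠ 0 →
      Nat.card {j : IB | Nonempty (YB j ≅ YB' k0)}
        = Nat.card {k : IB' | Nonempty (YB' k ≅ YB' k0)} :=
    fun k0 hk0 => key (YB' k0) (hlocB' k0) hk0 (hcompB' k0)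
  let γ := Quotient (CategoryTheory.isIsomorphicSetoid C)
  let f : {j : IB // 𝟙 (YB j) ≠ 0} → γ :=
    fun j => Quotient.mk (CategoryTheory.isIsomorphicSetoid C) (YB (j : IB))
  let g : {k : IB' // 𝟙 (YB' k) ≠ 0} → γ :=
    fun k => Quotient.mk (CategoryTheory.isIsomorphicSetoid C) (YB' (k : IB'))
  have fib : ∀ qq : γ, Nonempty ({j // f j = qq} ≃ {k // g k = qq}) := by
    intro qq
    by_cases hf : Nonempty {j // f j = qq}
    · obtain ⟨⟨⟨j0, hj0⟩, hq⟩⟩ := hf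
      have step1 : {j // f j = qq}
          ≃ {j : {j : IB // 𝟙 (YB j) ≠ 0} // Nonempty (YB (j : IB) ≅ YB j0)} :=
        Equiv.subtypeEquivRight (fun j => by
          show f j = qq ↔ Nonempty (YB (j : IB) ≅ YB j0)
          rw [← hq]
          exact ⟨fun hh => Quotient.exact hh, fun hh => Quotient.sound hh⟩)
      have step2 : {j : {j : IB // 𝟙 (YB j) ≠ 0} // Nonempty (YB (j : IB) ≅ YB j0)}
          ≃ {j : IB // 𝟙 (YB j) ≠ 0 ∧ Nonempty (YB j ≅ YB j0)} :=
        Equiv.subtypeSubtypeEquivSubtypeInter (fun j : IB => 𝟙 (YB j) ≠ 0)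
          (fun j : IB => Nonempty (YB j ≅ YB j0))
      have step3 : {j : IB // 𝟙 (YB j) ≠ 0 ∧ Nonempty (YB j ≅ YB j0)}
          ≃ {j : IB // Nonempty (YB j ≅ YB j0)} :=
        Equiv.subtypeEquivRight (fun j =>
          ⟨fun hh => hh.2, fun hh => ⟨id_ne_zero_of_iso hh.some hj0, hh⟩⟩)
      have ef : {j // f j = qq} ≃ {j : IB | Nonempty (YB j ≅ YB j0)} :=
        (step1.trans step2).trans step3
      have step1' : {k // g k = qq}
          ≃ {k : {k : IB' // 𝟙 (YB' k) ≠ 0} // Nonempty (YB' (k : IB') ≅ YB j0)} :=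
        Equiv.subtypeEquivRight (fun k => by
          show g k = qq ↔ Nonempty (YB' (k : IB') ≅ YB j0)
          rw [← hq]
          exact ⟨fun hh => Quotient.exact hh, fun hh => Quotient.sound hh⟩)
      have step2' : {k : {k : IB' // 𝟙 (YB' k) ≠ 0} // Nonempty (YB' (k : IB') ≅ YB j0)}
          ≃ {k : IB' // 𝟙 (YB' k) ≠ 0 ∧ Nonempty (YB' k ≅ YB j0)} :=
        Equiv.subtypeSubtypeEquivSubtypeInter (fun k : IB' => 𝟙 (YB' k) ≠ 0)
          (fun k : IB' => Nonempty (YB' k ≅ YB j0))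
      have step3' : {k : IB' // 𝟙 (YB' k) ≠ 0 ∧ Nonempty (YB' k ≅ YB j0)}
          ≃ {k : IB' // Nonempty (YB' k ≅ YB j0)} :=
        Equiv.subtypeEquivRight (fun k =>
          ⟨fun hh => hh.2, fun hh => ⟨id_ne_zero_of_iso hh.some hj0, hh⟩⟩)
      have eg : {k // g k = qq} ≃ {k : IB' | Nonempty (YB' k ≅ YB j0)} :=
        (step1'.trans step2').trans step3'
      haveI := (class_finite hfinB (YB j0)).to_subtype
      haveI := (class_finite hfinB' (YB j0)).to_subtype
      exact ⟨ef.trans ((Finite.card_eq.mp (hXprops j0 hj0)).some.trans eg.symm)⟩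
    · by_cases hg : Nonempty {k // g k = qq}
      · exfalso
        obtain ⟨⟨⟨k0, hk0⟩, hq⟩⟩ := hg
        have hempty : {j : IB | Nonempty (YB j ≅ YB' k0)} = ∅ := by
          rw [Set.eq_empty_iff_forall_notMem]
          intro j hj
          exact hf ⟨⟨⟨j, id_ne_zero_of_iso hj.some hk0⟩, by
            rw [← hq]
            exact Quotient.sound hj⟩⟩
        have h0 : Nat.card {j : IB | Nonempty (YB j ≅ YB' k0)} = 0 := by
          rw [hempty]
          simp
        rw [hXprops' k0 hk0] at h0
        haveI := (class_finite hfinB' (YB' k0)).to_subtype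
        have : Nonempty ↥{k : IB' | Nonempty (YB' k ≅ YB' k0)} := ⟨⟨k0, ⟨Iso.refl _⟩⟩⟩
        rw [Nat.card_eq_zero] at h0
        rcases h0 with h0 | h0
        · exact (not_nonempty_iff.mpr h0) this
        · exact (not_finite_iff_infinite.mpr h0) ‹_›
      · haveI := not_nonempty_iff.mp hf
        haveI := not_nonempty_iff.mp hg
        exact ⟨Equiv.equivOfIsEmpty _ _⟩
  let E := Equiv.ofFiberEquiv (f := f) (g := g) (fun qq => (fib qq).some)
  have hE : ∀ j, g (E j) = f j := fun j => Equiv.ofFiberEquiv_map _ j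
  have τs : ∀ j : {j : IB // 𝟙 (YB j) ≠ 0}, YB (j : IB) ≅ YB' ((E j : {k : IB' // 𝟙 (YB' k) ≠ 0}) : IB') :=
    fun j => (Quotient.exact (hE j)).some.symm
  obtain ⟨ψ⟩ := reindex_iso (restrictCofan cB) (restrictCofan_isColimit cB hcB)
    (restrictCofan cB') (restrictCofan_isColimit cB' hcB') E τs
  exact ⟨(eB.symm.trans ψ).trans eB'⟩
end

section
/- Let ··· → X_1 →^{f_1} X_2 →^{f_2} X_3 → ··· be a long exact sequence (indexed by ℤ) in an abelian category A which is a full subcategory of an AB4 abelian category G. If the direct sum ⨁_i X_i exists in A, then ∑_i [X_{2i}] = ∑_i [X_{2i+1}] in the Grothendieck group G_0(A), where [⨁_i X_{2i}] and [⨁_i X_{2i+1}] are well defined classes. -/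
open CategoryTheory CategoryTheory.Limits

/-- Exactness of a composable pair in an abelian category. -/
def ExactAt {A : Type*} [Category A] [Abelian A] {X Y Z : A}
    (f : X ⟶ Y) (g : Y ⟶ Z) : Prop :=
  ∃ w : f ≫ g = 0, (CategoryTheory.ShortComplex.mk f g w).Exact

variable {G : Type*} [Category G] [Abelian G]

/-- Relations of the Grothendieck group of the full (abelian, exactly embedded)
subcategory of `G` on the objects satisfying `P`: for every short exact sequence
`0 → X → Y → Z → 0` with all terms in `P`, the element `[Y] - [X] - [Z]`. -/
def g0Rel (P : G → Prop) : AddSubgroup (FreeAbelianGroup {X : G // P X}) :=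
  AddSubgroup.closure {x | ∃ (X Y Z : {X : G // P X}) (f : (X : G) ⟶ (Y : G))
    (g : (Y : G) ⟶ (Z : G)), Mono f ∧ Epi g ∧ ExactAt f g ∧
    x = FreeAbelianGroup.of Y - FreeAbelianGroup.of X - FreeAbelianGroup.of Z}

/-- The Grothendieck group `G_0` of the full subcategory of `G` on `P`. -/
def G0 (P : G → Prop) : Type _ :=
  FreeAbelianGroup {X : G // P X} ⧸ g0Rel P

/-- The class of an object in the Grothendieck group. -/
def g0cls (P : G → Prop) (X : {X : G // P X}) : G0 P :=
  QuotientAddGroup.mk (FreeAbelianGroup.of X)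

instance (P : G → Prop) : AddCommGroup (G0 P) :=
  QuotientAddGroup.Quotient.addCommGroup (g0Rel P)

/-! ### Auxiliary lemmas -/

/-- The class in `G_0` is additive on short exact sequences with all terms in `P`. -/
lemma g0cls_ses (P : G → Prop) {Xo Yo Zo : G} (hX : P Xo) (hY : P Yo) (hZ : P Zo)
    (u : Xo ⟶ Yo) (v : Yo ⟶ Zo) (hu : Mono u) (hv : Epi v) (he : ExactAt u v) :
    g0cls P ⟨Yo, hY⟩ = g0cls P ⟨Xo, hX⟩ + g0cls P ⟨Zo, hZ⟩ := by
  have hmem : (FreeAbelianGroup.of (⟨Yo, hY⟩ : {X : G // P X}) -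
      (FreeAbelianGroup.of ⟨Xo, hX⟩ + FreeAbelianGroup.of ⟨Zo, hZ⟩)) ∈ g0Rel P := by
    rw [sub_add_eq_sub_sub]
    exact AddSubgroup.subset_closure ⟨⟨Xo, hX⟩, ⟨Yo, hY⟩, ⟨Zo, hZ⟩, u, v, hu, hv, he, rfl⟩
  show (QuotientAddGroup.mk _ : FreeAbelianGroup {X : G // P X} ⧸ g0Rel P) =
    QuotientAddGroup.mk _ + QuotientAddGroup.mk _
  refine ((QuotientAddGroup.eq_iff_sub_mem).2 hmem).trans ?_
  exact QuotientAddGroup.mk_add (N := g0Rel P) _ _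

/-- Under AB4, the coproduct of a family of exact composable pairs is exact. -/
lemma exactAt_sigma_map [HasCoproducts.{0} G]
    (hAB4 : ∀ (P Q : ℤ → G) (u : ∀ i, P i ⟶ Q i), (∀ i, Mono (u i)) →
      Mono (Limits.Sigma.map u))
    {A B C : ℤ → G} (u : ∀ i, A i ⟶ B i) (v : ∀ i, B i ⟶ C i)
    (h : ∀ i, ExactAt (u i) (v i)) :
    ExactAt (Limits.Sigma.map u) (Limits.Sigma.map v) := by
  have w : ∀ i, u i ≫ v i = 0 := fun i => (h i).1
  have wS : Limits.Sigma.map u ≫ Limits.Sigma.map v = 0 := by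
    ext i
    simp [reassoc_of% (w i)]
  have hj : ∀ i, Mono (cokernel.desc (u i) (v i) (w i)) := by
    intro i
    obtain ⟨wi, hi⟩ := h i
    exact (ShortComplex.exact_iff_mono_cokernel_desc _).1 hi
  have hjS : Mono (Limits.Sigma.map fun i => cokernel.desc (u i) (v i) (w i)) := hAB4 _ _ _ hj
  have zero1 : Limits.Sigma.map u ≫ Limits.Sigma.map (fun i => cokernel.π (u i)) = 0 := by
    ext i
    simp [reassoc_of% (cokernel.condition (u i))]
  have hcol : IsColimit (CokernelCofork.ofπ _ zero1) := by
    refine CokernelCofork.IsColimit.ofπ _ zero1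
      (fun {T} t ht => Sigma.desc fun i => cokernel.desc (u i) (Sigma.ι B i ≫ t) ?_) ?_ ?_
    · have : Sigma.ι A i ≫ Limits.Sigma.map u ≫ t = 0 := by rw [ht]; simp
      simpa using this
    · intro T t ht
      ext i
      simp
    · intro T t ht m hm
      have : Epi (Limits.Sigma.map fun i => cokernel.π (u i)) := inferInstance
      rw [← cancel_epi (Limits.Sigma.map fun i => cokernel.π (u i)), hm]
      ext i
      simp
  have e1 : (ShortComplex.mk (Limits.Sigma.map u)
      (Limits.Sigma.map fun i => cokernel.π (u i)) zero1).Exact :=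
    ShortComplex.exact_of_g_is_cokernel _ hcol
  let φ : ShortComplex.mk (Limits.Sigma.map u)
      (Limits.Sigma.map fun i => cokernel.π (u i)) zero1 ⟶
      ShortComplex.mk (Limits.Sigma.map u) (Limits.Sigma.map v) wS :=
    { τ₁ := 𝟙 _, τ₂ := 𝟙 _, τ₃ := Limits.Sigma.map fun i => cokernel.desc (u i) (v i) (w i),
      comm₁₂ := by simp
      comm₂₃ := by ext i; simp }
  have h1 : Epi φ.τ₁ := by dsimp [φ]; infer_instance
  have h2 : IsIso φ.τ₂ := by dsimp [φ]; infer_instance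
  have h3 : Mono φ.τ₃ := hjS
  exact ⟨wS, (ShortComplex.exact_iff_of_epi_of_isIso_of_mono φ).1 e1⟩

/-- From an exact composable pair, one gets a short exact sequence
`0 → im g → b → im h → 0`. -/
lemma exactAt_image {a b c : G} (g : a ⟶ b) (h : b ⟶ c) (he : ExactAt g h) :
    ExactAt (Limits.image.ι g) (Limits.factorThruImage h) := by
  obtain ⟨w, hw⟩ := he
  have w1 : g ≫ Limits.factorThruImage h = 0 := by
    rw [← cancel_mono (Limits.image.ι h), Category.assoc, Limits.image.fac, zero_comp]
    exact w
  have hgh : Limits.image.ι g ≫ Limits.factorThruImage h = 0 := by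
    rw [← cancel_epi (Limits.factorThruImage g), Limits.image.fac_assoc, w1, comp_zero]
  refine ⟨hgh, ?_⟩
  have e1 : (ShortComplex.mk g (Limits.factorThruImage h) w1).Exact := by
    let φ : ShortComplex.mk g (Limits.factorThruImage h) w1 ⟶ ShortComplex.mk g h w :=
      { τ₁ := 𝟙 _, τ₂ := 𝟙 _, τ₃ := Limits.image.ι h, comm₁₂ := by simp, comm₂₃ := by simp }
    have h1 : Epi φ.τ₁ := by dsimp [φ]; infer_instance
    have h2 : IsIso φ.τ₂ := by dsimp [φ]; infer_instance
    have h3 : Mono φ.τ₃ := by dsimp [φ]; infer_instance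
    exact (ShortComplex.exact_iff_of_epi_of_isIso_of_mono φ).2 hw
  let φ2 : ShortComplex.mk g (Limits.factorThruImage h) w1 ⟶
      ShortComplex.mk (Limits.image.ι g) (Limits.factorThruImage h) hgh :=
    { τ₁ := Limits.factorThruImage g, τ₂ := 𝟙 _, τ₃ := 𝟙 _,
      comm₁₂ := by simp, comm₂₃ := by simp }
  have h1 : Epi φ2.τ₁ := by dsimp [φ2]; infer_instance
  have h2 : IsIso φ2.τ₂ := by dsimp [φ2]; infer_instance
  have h3 : Mono φ2.τ₃ := by dsimp [φ2]; infer_instance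
  exact (ShortComplex.exact_iff_of_epi_of_isIso_of_mono φ2).1 e1

section
variable [HasCoproducts.{0} G]

/-- The canonical map `⨁ᵢ X_{2i} ⟶ ⨁ᵢ X_{2i+1}` induced by `f`. -/
noncomputable def evenToOdd (X : ℤ → G) (f : ∀ i, X i ⟶ X (i + 1)) :
    (∐ fun i : ℤ => X (2 * i)) ⟶ (∐ fun i : ℤ => X (2 * i + 1)) :=
  Limits.Sigma.map fun i => f (2 * i)

/-- Reindexing isomorphism `⨁ᵢ X_{2i+2} ≅ ⨁ᵢ X_{2i}`. -/
noncomputable def shiftRho (X : ℤ → G) :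
    (∐ fun i : ℤ => X (2 * i + 1 + 1)) ≅ (∐ fun i : ℤ => X (2 * i)) :=
  Sigma.whiskerEquiv (Equiv.addRight (1 : ℤ))
    (fun j => eqToIso (by rw [Equiv.coe_addRight]; congr 1; ring))

/-- Reindexing isomorphism `⨁ᵢ X_{2i+3} ≅ ⨁ᵢ X_{2i+1}`. -/
noncomputable def shiftSigma (X : ℤ → G) :
    (∐ fun i : ℤ => X (2 * i + 1 + 1 + 1)) ≅ (∐ fun i : ℤ => X (2 * i + 1)) :=
  Sigma.whiskerEquiv (Equiv.addRight (1 : ℤ))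
    (fun j => eqToIso (by rw [Equiv.coe_addRight]; congr 1; ring))

/-- The canonical map `⨁ᵢ X_{2i+1} ⟶ ⨁ᵢ X_{2i}` induced by `f` (with reindexing). -/
noncomputable def oddToEven (X : ℤ → G) (f : ∀ i, X i ⟶ X (i + 1)) :
    (∐ fun i : ℤ => X (2 * i + 1)) ⟶ (∐ fun i : ℤ => X (2 * i)) :=
  Limits.Sigma.map (fun i => f (2 * i + 1)) ≫ (shiftRho X).hom

omit [Abelian G] [HasCoproducts.{0} G] in
lemma f_hcongr (X : ℤ → G) (f : ∀ i, X i ⟶ X (i + 1)) {j k : ℤ} (h : j = k) :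
    eqToHom (congrArg X h) ≫ f k = f j ≫ eqToHom (congrArg X (by rw [h])) := by
  subst h; simp

lemma shift_square (X : ℤ → G) (f : ∀ i, X i ⟶ X (i + 1)) :
    (shiftRho X).hom ≫ evenToOdd X f =
      Limits.Sigma.map (fun i => f (2 * i + 1 + 1)) ≫ (shiftSigma X).hom := by
  ext j
  simp only [shiftRho, shiftSigma]
  rw [Limits.Sigma.whiskerEquiv_hom, Limits.Sigma.whiskerEquiv_hom]
  simp only [shiftRho, shiftSigma, evenToOdd, Limits.Sigma.whiskerEquiv_hom,
    Limits.Sigma.ι_comp_map'_assoc, Limits.Sigma.ι_comp_map', eqToIso.inv,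
    ι_colimMap_assoc, ι_colimMap, Discrete.natTrans_app, Discrete.functor_obj_eq_as,
    Equiv.coe_addRight, Category.assoc, Limits.Sigma.ι_map_assoc, Limits.Sigma.ι_map]
  rw [← Category.assoc, ← Category.assoc]
  exact eq_whisker (f_hcongr X f (show 2 * j + 1 + 1 = 2 * (j + 1) by ring)) _

end

/-- given a `ℤ`-indexed long exact sequence `⋯ → X_1 → X_2 → X_3 → ⋯`
in a full abelian subcategory `A` (cut out by `P`, closed under images) of an AB4
abelian category `G`, if the direct sum `⨁ᵢ Xᵢ` lies in `A`, then
`∑ᵢ [X_{2i}] = ∑ᵢ [X_{2i+1}]`, i.e. `[⨁ᵢ X_{2i}] = [⨁ᵢ X_{2i+1}]`, in `G_0(A)`. -/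
theorem stmt_12 [HasCoproducts.{0} G]
    (hAB4 : ∀ (P Q : ℤ → G) (u : ∀ i, P i ⟶ Q i), (∀ i, Mono (u i)) →
      Mono (Limits.Sigma.map u))
    (P : G → Prop)
    (hPim : ∀ (X Y : G) (f : X ⟶ Y), P X → P Y → P (Limits.image f))
    (X : ℤ → G) (f : ∀ i, X i ⟶ X (i + 1))
    (hlex : ∀ i, ExactAt (f i) (f (i + 1)))
    (hPX : ∀ i, P (X i))
    (hPall : P (∐ X))
    (hPeven : P (∐ fun i : ℤ => X (2 * i)))
    (hPodd : P (∐ fun i : ℤ => X (2 * i + 1))) :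
    g0cls P ⟨∐ fun i : ℤ => X (2 * i), hPeven⟩ =
      g0cls P ⟨∐ fun i : ℤ => X (2 * i + 1), hPodd⟩ := by
  -- exactness of `⨁ X_{2i} → ⨁ X_{2i+1} → ⨁ X_{2i}`
  have h21 : ExactAt (evenToOdd X f) (oddToEven X f) := by
    obtain ⟨w0, e0⟩ := exactAt_sigma_map hAB4 (fun i => f (2 * i)) (fun i => f (2 * i + 1))
      (fun i => hlex (2 * i))
    have wS : evenToOdd X f ≫ oddToEven X f = 0 := by
      show (Limits.Sigma.map fun i => f (2 * i)) ≫
        (Limits.Sigma.map fun i => f (2 * i + 1)) ≫ (shiftRho X).hom = 0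
      rw [← Category.assoc, w0, zero_comp]
    refine ⟨wS, ?_⟩
    let φ : ShortComplex.mk _ _ w0 ⟶ ShortComplex.mk _ _ wS :=
      { τ₁ := 𝟙 _, τ₂ := 𝟙 _, τ₃ := (shiftRho X).hom
        comm₁₂ := by simp [evenToOdd]
        comm₂₃ := by simp [oddToEven] }
    have h1 : Epi φ.τ₁ := by dsimp [φ]; infer_instance
    have h2 : IsIso φ.τ₂ := by dsimp [φ]; infer_instance
    have h3 : Mono φ.τ₃ := by dsimp [φ]; infer_instance
    exact (ShortComplex.exact_iff_of_epi_of_isIso_of_mono φ).1 e0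
  -- exactness of `⨁ X_{2i+1} → ⨁ X_{2i} → ⨁ X_{2i+1}`
  have h12 : ExactAt (oddToEven X f) (evenToOdd X f) := by
    obtain ⟨w0, e0⟩ := exactAt_sigma_map hAB4 (fun i => f (2 * i + 1))
      (fun i => f (2 * i + 1 + 1)) (fun i => hlex (2 * i + 1))
    have wS : oddToEven X f ≫ evenToOdd X f = 0 := by
      show ((Limits.Sigma.map fun i => f (2 * i + 1)) ≫ (shiftRho X).hom) ≫
        evenToOdd X f = 0
      rw [Category.assoc, shift_square X f, ← Category.assoc, w0, zero_comp]
    refine ⟨wS, ?_⟩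
    let φ : ShortComplex.mk _ _ w0 ⟶ ShortComplex.mk _ _ wS :=
      { τ₁ := 𝟙 _, τ₂ := (shiftRho X).hom, τ₃ := (shiftSigma X).hom
        comm₁₂ := by simp [oddToEven]
        comm₂₃ := shift_square X f }
    have h1 : Epi φ.τ₁ := by dsimp [φ]; infer_instance
    have h2 : IsIso φ.τ₂ := by dsimp [φ]; infer_instance
    have h3 : Mono φ.τ₃ := by dsimp [φ]; infer_instance
    exact (ShortComplex.exact_iff_of_epi_of_isIso_of_mono φ).1 e0
  have key1 := exactAt_image _ _ h12
  have key2 := exactAt_image _ _ h21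
  have r1 := g0cls_ses P (hPim _ _ (oddToEven X f) hPodd hPeven) hPeven
    (hPim _ _ (evenToOdd X f) hPeven hPodd)
    (Limits.image.ι (oddToEven X f)) (Limits.factorThruImage (evenToOdd X f))
    inferInstance inferInstance key1
  have r2 := g0cls_ses P (hPim _ _ (evenToOdd X f) hPeven hPodd) hPodd
    (hPim _ _ (oddToEven X f) hPodd hPeven)
    (Limits.image.ι (evenToOdd X f)) (Limits.factorThruImage (oddToEven X f))
    inferInstance inferInstance key2
  rw [r1, r2, add_comm]
end

section
/- Let R be a ℤ^n-graded k-algebra (k a field) which is c.b.l.f. dimensional, positive (R = ⨁_{g⪰0} R_g), and with R_0 semi-simple. Then for the simple graded modules S_i = Re_i / R_{≻0}e_i associated to primitive idempotents e_i ∈ R_0, one has Ext^1_R(S_i, x^g S_j) = 0 in the category of graded R-modules with degree-zero maps whenever g ≺ 0; moreover every simple object of this category is isomorphic to a grading shift of some S_i. -/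
/-- A submodule of a graded module is homogeneous if it contains the homogeneous
components of all of its elements. -/
def HomogSubmodule {n : ℕ} {k R M : Type*} [Field k] [Ring R] [Algebra k R]
    [AddCommGroup M] [Module R M] [Module k M]
    (ℳ : (Fin n → ℤ) → Submodule k M) [DirectSum.Decomposition ℳ]
    (N : Submodule R M) : Prop :=
  ∀ x ∈ N, ∀ g : Fin n → ℤ, ((DirectSum.decompose ℳ x) g : M) ∈ N

/-- Scalar multiplication by a ring element as a `k`-linear map, via the scalar tower. -/
private def smulLinAux (k : Type*) {R M : Type*} [CommSemiring k] [Ring R] [Algebra k R]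
    [AddCommGroup M] [Module R M] [Module k M] [IsScalarTower k R M] (a : R) :
    M →ₗ[k] M where
  toFun x := a • x
  map_add' := smul_add a
  map_smul' c x := by
    simp only [RingHom.id_apply]
    rw [← algebraMap_smul R c x, ← mul_smul, ← Algebra.commutes c a, mul_smul,
      algebraMap_smul]

/-- The degree-`g` component as a `k`-linear map. -/
private def compLinAux {ι k M : Type*} [DecidableEq ι] [Semiring k] [AddCommMonoid M]
    [Module k M] (ℳ : ι → Submodule k M) [DirectSum.Decomposition ℳ] (g : ι) :
    M →ₗ[k] ℳ g where
  toFun x := DirectSum.decompose ℳ x g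
  map_add' x y := by
    show (DirectSum.decompose ℳ (x + y)) g = _
    rw [DirectSum.decompose_add, DirectSum.add_apply]
  map_smul' c x := by
    show (DirectSum.decompose ℳ (c • x)) g = _
    rw [DirectSum.decompose_smul, DirectSum.smul_apply]
    rfl

/-- Upgrading a `k`-submodule stable under the `R`-action to an `R`-submodule. -/
private def ofKAux {k R M : Type*} [Semiring k] [Ring R] [AddCommGroup M] [Module R M]
    [Module k M] (W : Submodule k M) (h : ∀ (a : R) (x : M), x ∈ W → a • x ∈ W) :
    Submodule R M where
  carrier := W
  add_mem' := W.add_mem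
  zero_mem' := W.zero_mem
  smul_mem' := h

private theorem mem_ofKAux {k R M : Type*} [Semiring k] [Ring R] [AddCommGroup M] [Module R M]
    [Module k M] (W : Submodule k M) (h) (x : M) : x ∈ ofKAux (R := R) W h ↔ x ∈ W :=
  Iff.rfl

/-- let `R` be a positive, c.b.l.f. dimensional `ℤ^n`-graded `k`-algebra
with `R_0` semisimple.  Then (a) `Ext¹(S_i, x^g S_j) = 0` for `g ≺ 0`: every extension
of graded modules `0 → T → E → S → 0` with `T` simple concentrated in degree `g ≺ 0`
and the quotient `S` simple concentrated in degree `0` splits by a graded complement;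
and (b) every simple graded module is (up to grading shift) isomorphic to some
`S_i = Re_i / R_{≻0}e_i`: it is concentrated in a single degree `g` and is generated
by an element `s` with `e • s = s` for a primitive idempotent `e ∈ R_0`, the kernel of
the induced surjection `Re ↠ S` being `R_{≻0}e`. -/
theorem stmt_16 (n m : ℕ) (k : Type*) [Field k]
    (r : (Fin n → ℤ) → (Fin n → ℤ) → Prop)
    (htot : IsStrictTotalOrder (Fin n → ℤ) r)
    (hadd : ∀ a b c : Fin n → ℤ, r a b → r (a + c) (b + c))
    (R : Type*) [Ring R] [Algebra k R]
    (𝒜 : (Fin n → ℤ) → Submodule k R) [GradedAlgebra 𝒜]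
    -- c.b.l.f. dimensional
    (hdim : ∀ g, FiniteDimensional k ↥(𝒜 g))
    (v : Fin m → (Fin n → ℤ)) (hv : ∀ i, r 0 (v i))
    (e₀ : Fin n → ℤ) (hsupp : ∀ g, 𝒜 g ≠ ⊥ → InConeZ v (g - e₀))
    -- positivity: `R = ⨁_{g ⪰ 0} R_g`
    (hposR : ∀ g : Fin n → ℤ, ¬(g = 0 ∨ r 0 g) → 𝒜 g = ⊥)
    -- `R_0` is semisimple
    (hss : IsSemisimpleRing ↥(𝒜 0)) :
    -- (a) Ext¹ vanishing for `g ≺ 0`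
    (∀ (E : Type*) (_ : AddCommGroup E) (_ : Module R E) (_ : Module k E)
      (_ : IsScalarTower k R E)
      (ℰ : (Fin n → ℤ) → Submodule k E) (_ : DirectSum.Decomposition ℰ),
      (∀ (g h : Fin n → ℤ) (a : R) (x : E), a ∈ 𝒜 g → x ∈ ℰ h → a • x ∈ ℰ (g + h)) →
      ∀ (g : Fin n → ℤ), r g 0 →
      ∀ N : Submodule R E, HomogSubmodule ℰ N →
        -- `N ≅ x^g S_j`: concentrated in degree `g` and graded-simple
        (∀ x : E, x ∈ N → x ∈ ℰ g) → N ≠ ⊥ →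
        (∀ N' : Submodule R E, HomogSubmodule ℰ N' → N' ≤ N → N' = ⊥ ∨ N' = N) →
        -- `E/N ≅ S_i`: concentrated in degree `0` and graded-simple
        (∀ h : Fin n → ℤ, h ≠ 0 → ∀ x : E, x ∈ ℰ h → x ∈ N) → N ≠ ⊤ →
        (∀ N' : Submodule R E, HomogSubmodule ℰ N' → N ≤ N' → N' = N ∨ N' = ⊤) →
        -- the extension splits by a graded complement
        ∃ N' : Submodule R E, HomogSubmodule ℰ N' ∧ IsCompl N N') ∧
    -- (b) classification of simple graded modules
    (∀ (S : Type*) (_ : AddCommGroup S) (_ : Module R S) (_ : Module k S)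
      (_ : IsScalarTower k R S)
      (𝒮 : (Fin n → ℤ) → Submodule k S) (_ : DirectSum.Decomposition 𝒮),
      (∀ (g h : Fin n → ℤ) (a : R) (x : S), a ∈ 𝒜 g → x ∈ 𝒮 h → a • x ∈ 𝒮 (g + h)) →
      (∀ N : Submodule R S, HomogSubmodule 𝒮 N → N = ⊥ ∨ N = ⊤) →
      (⊥ : Submodule R S) ≠ ⊤ →
      ∃ (g : Fin n → ℤ) (s : S) (e : R),
        s ∈ 𝒮 g ∧ (∀ h : Fin n → ℤ, h ≠ g → 𝒮 h = ⊥) ∧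
        e ∈ 𝒜 0 ∧ e * e = e ∧ e ≠ 0 ∧
        (∀ a b : R, a ∈ 𝒜 0 → b ∈ 𝒜 0 → a * a = a → b * b = b →
          a * b = 0 → b * a = 0 → a + b = e → a = 0 ∨ b = 0) ∧
        e • s = s ∧ Submodule.span R {s} = ⊤ ∧
        (∀ x : R, (x * e) • s = 0 ↔
          ∃ y ∈ (⨆ h ∈ {h : Fin n → ℤ | r 0 h}, 𝒜 h), x * e = y * e)) := by
  classical
  have hirr : ∀ a, ¬ r a a := htot.toIsStrictOrder.toIrrefl.irrefl
  have htr : ∀ a b c, r a b → r b c → r a c := htot.toIsStrictOrder.toIsTrans.trans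
  have htri : ∀ a b, r a b ∨ a = b ∨ r b a := fun a b => by
    have := htot.toTrichotomous.trichotomous a b; tauto
  constructor
  · -- part (a)
    intro E _ _ _ _ ℰ _ hcompat g hg N hNhom hNg hNbot hNsimp hEup hNtop hQsimp
    have hg0 : g ≠ 0 := fun h => hirr 0 (h ▸ hg)
    -- any degree other than 0 and g is trivial
    have hE2 : ∀ h : Fin n → ℤ, h ≠ 0 → h ≠ g → ∀ x ∈ ℰ h, x = (0 : E) := by
      intro h h0 hgne x hx
      have hxN : x ∈ N := hEup h h0 x hx
      have hxg : x ∈ ℰ g := hNg x hxN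
      have h1 : ((DirectSum.decompose ℰ x) h : E) = x := DirectSum.decompose_of_mem_same ℰ hx
      have h2 : ((DirectSum.decompose ℰ x) h : E) = 0 :=
        DirectSum.decompose_of_mem_ne ℰ hxg (fun hc => hgne hc.symm)
      rw [h1] at h2; exact h2
    -- ℰ 0 is stable under the R-action
    have hstab : ∀ (a : R) (x : E), x ∈ ℰ 0 → a • x ∈ ℰ 0 := by
      intro a x hx
      rw [← DirectSum.sum_support_decompose 𝒜 a, Finset.sum_smul]
      refine Submodule.sum_mem _ ?_
      intro c _
      have hmem : ((DirectSum.decompose 𝒜 a) c : R) • x ∈ ℰ c := by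
        have := hcompat c 0 _ x ((DirectSum.decompose 𝒜 a) c).2 hx
        rwa [add_zero] at this
      by_cases hc0 : c = 0
      · subst hc0; exact hmem
      · by_cases hA : 𝒜 c = ⊥
        · rw [(Submodule.eq_bot_iff _).mp hA _ ((DirectSum.decompose 𝒜 a) c).2, zero_smul]
          exact Submodule.zero_mem _
        · have hrc : r 0 c := by
            by_contra hcon
            exact hA (hposR c (not_or.mpr ⟨hc0, hcon⟩))
          have hcg : c ≠ g := fun hcg => hirr g (htr g 0 g hg (hcg ▸ hrc))
          rw [hE2 c hc0 hcg _ hmem]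
          exact Submodule.zero_mem _
    refine ⟨ofKAux (ℰ 0) hstab, ?_, ?_, ?_⟩
    · intro x hx h
      rw [mem_ofKAux] at hx ⊢
      by_cases h0 : h = 0
      · subst h0; rw [DirectSum.decompose_of_mem_same ℰ hx]; exact hx
      · rw [DirectSum.decompose_of_mem_ne ℰ hx (fun hc => h0 hc.symm)]
        exact Submodule.zero_mem _
    · rw [Submodule.disjoint_def]
      intro x hxN hxN'
      rw [mem_ofKAux] at hxN'
      have h1 : ((DirectSum.decompose ℰ x) 0 : E) = x := DirectSum.decompose_of_mem_same ℰ hxN'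
      have h2 : ((DirectSum.decompose ℰ x) 0 : E) = 0 :=
        DirectSum.decompose_of_mem_ne ℰ (hNg x hxN) hg0
      rw [h1] at h2; exact h2
    · rw [codisjoint_iff, Submodule.eq_top_iff']
      intro x
      rw [← DirectSum.sum_support_decompose ℰ x]
      refine Submodule.sum_mem _ ?_
      intro c _
      by_cases hc0 : c = 0
      · subst hc0
        exact Submodule.mem_sup_right ((mem_ofKAux _ _ _).mpr ((DirectSum.decompose ℰ x) 0).2)
      · exact Submodule.mem_sup_left (hEup c hc0 _ ((DirectSum.decompose ℰ x) c).2)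
  · -- part (b)
    intro S _ _ _ _ 𝒮 _ hcompat hsimp hnt
    -- Step 1: some degree is nontrivial
    have hex : ∃ g, 𝒮 g ≠ ⊥ := by
      by_contra hcon
      push_neg at hcon
      apply hnt
      have hall : ∀ x : S, x = 0 := by
        intro x
        rw [← DirectSum.sum_support_decompose 𝒮 x]
        refine Finset.sum_eq_zero ?_
        intro c _
        exact (Submodule.eq_bot_iff _).mp (hcon c) _ ((DirectSum.decompose 𝒮 x) c).2
      refine le_antisymm bot_le ?_
      intro x _
      rw [hall x]; exact Submodule.zero_mem _
    -- Step 2: if a degree below another is nontrivial, the higher one is trivial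
    have haux : ∀ g h : Fin n → ℤ, r g h → 𝒮 g ≠ ⊥ → 𝒮 h = ⊥ := by
      intro g h hgh hSg
      by_contra hSh
      obtain ⟨s, hs, hs0⟩ := (Submodule.ne_bot_iff _).mp hSg
      obtain ⟨t, ht, ht0⟩ := (Submodule.ne_bot_iff _).mp hSh
      set P : Set (Fin n → ℤ) := {d | d = h ∨ r h d} with hP
      have hPclose : ∀ c d : Fin n → ℤ, (c = 0 ∨ r 0 c) → d ∈ P → (c + d) ∈ P := by
        rintro c d (rfl | hc) hd
        · rwa [zero_add]
        · have h2 : ∀ d' : Fin n → ℤ, r d' (c + d') := by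
            intro d'
            have := hadd 0 c d' hc
            rwa [zero_add] at this
          rcases hd with rfl | hd
          · exact Or.inr (h2 d)
          · exact Or.inr (htr _ _ _ hd (h2 d))
      set Nk : Submodule k S := ⨆ d ∈ P, 𝒮 d with hNk
      have hgen : ∀ d ∈ P, 𝒮 d ≤ Nk := fun d hd =>
        le_iSup₂ (f := fun (d : Fin n → ℤ) (_ : d ∈ P) => 𝒮 d) d hd
      -- R-stability of Nk
      have hR : ∀ (a : R) (x : S), x ∈ Nk → a • x ∈ Nk := by
        intro a x hx
        have key : Nk ≤ Submodule.comap (smulLinAux k (R := R) a) Nk := by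
          refine iSup₂_le ?_
          intro d hd y hy
          show a • y ∈ Nk
          rw [← DirectSum.sum_support_decompose 𝒜 a, Finset.sum_smul]
          refine Submodule.sum_mem _ ?_
          intro c _
          have hmem : ((DirectSum.decompose 𝒜 a) c : R) • y ∈ 𝒮 (c + d) :=
            hcompat c d _ y ((DirectSum.decompose 𝒜 a) c).2 hy
          by_cases hA : 𝒜 c = ⊥
          · rw [(Submodule.eq_bot_iff _).mp hA _ ((DirectSum.decompose 𝒜 a) c).2, zero_smul]
            exact Submodule.zero_mem _
          · have hc0 : c = 0 ∨ r 0 c := by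
              by_contra hcon
              exact hA (hposR c (by tauto))
            exact hgen _ (hPclose c d hc0 hd) hmem
        exact key hx
      have hNhom : HomogSubmodule 𝒮 (ofKAux Nk hR) := by
        intro x hx d
        rw [mem_ofKAux] at hx ⊢
        have key : Nk ≤ Submodule.comap ((𝒮 d).subtype ∘ₗ compLinAux 𝒮 d) Nk := by
          refine iSup₂_le ?_
          intro d' hd' y hy
          show ((DirectSum.decompose 𝒮 y) d : S) ∈ Nk
          by_cases hdd : d' = d
          · subst hdd
            rw [DirectSum.decompose_of_mem_same 𝒮 hy]
            exact hgen _ hd' hy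
          · rw [DirectSum.decompose_of_mem_ne 𝒮 hy hdd]
            exact Submodule.zero_mem _
        exact key hx
      have hsN : s ∉ Nk := by
        intro hsNk
        have key : Nk ≤ LinearMap.ker (compLinAux 𝒮 g) := by
          refine iSup₂_le ?_
          intro d hd y hy
          rw [LinearMap.mem_ker]
          have hdg : d ≠ g := by
            have hgd : r g d := by
              rcases hd with rfl | hd
              · exact hgh
              · exact htr g h d hgh hd
            exact fun hc => hirr g (hc ▸ hgd)
          exact Subtype.ext (DirectSum.decompose_of_mem_ne 𝒮 hy hdg)
        have h0 := key hsNk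
        rw [LinearMap.mem_ker] at h0
        apply hs0
        have h1 : ((DirectSum.decompose 𝒮 s) g : S) = s := DirectSum.decompose_of_mem_same 𝒮 hs
        have h2 : ((compLinAux 𝒮 g s : ↥(𝒮 g)) : S) = s := h1
        rw [h0] at h2
        exact h2.symm
      rcases hsimp (ofKAux Nk hR) hNhom with hb | htop
      · have hmem : t ∈ ofKAux Nk hR := (mem_ofKAux _ _ _).mpr (hgen h (Or.inl rfl) ht)
        rw [hb] at hmem
        exact ht0 ((Submodule.mem_bot _).mp hmem)
      · apply hsN
        have hmem : s ∈ ofKAux Nk hR := htop ▸ Submodule.mem_top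
        exact (mem_ofKAux _ _ _).mp hmem
    -- Step 3: concentration in a single degree g
    obtain ⟨g, hSgbot⟩ := hex
    have hcon : ∀ h : Fin n → ℤ, h ≠ g → 𝒮 h = ⊥ := by
      intro h hne
      rcases htri g h with hgh | hEq | hhg
      · exact haux g h hgh hSgbot
      · exact absurd hEq.symm hne
      · by_contra hSh
        exact hSgbot (haux h g hhg hSh)
    -- Step 4: every element lives in 𝒮 g
    have hallg : ∀ x : S, x ∈ 𝒮 g := by
      intro x
      rw [← DirectSum.sum_support_decompose 𝒮 x]
      refine Submodule.sum_mem _ ?_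
      intro c _
      by_cases hc : c = g
      · subst hc; exact ((DirectSum.decompose 𝒮 x) c).2
      · rw [(Submodule.eq_bot_iff _).mp (hcon c hc) _ ((DirectSum.decompose 𝒮 x) c).2]
        exact Submodule.zero_mem _
    -- Step 5: every R-submodule is homogeneous, hence ⊥ or ⊤
    have hsimp' : ∀ N : Submodule R S, N = ⊥ ∨ N = ⊤ := by
      intro N
      refine hsimp N ?_
      intro x hx d
      by_cases hd : d = g
      · subst hd
        rw [DirectSum.decompose_of_mem_same 𝒮 (hallg x)]
        exact hx
      · rw [DirectSum.decompose_of_mem_ne 𝒮 (hallg x) (fun hc => hd hc.symm)]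
        exact Submodule.zero_mem _
    obtain ⟨s₀, hs₀g, hs₀0⟩ := (Submodule.ne_bot_iff _).mp hSgbot
    -- Step 6: the positive part annihilates s₀
    have hposmap : ∀ y : R, y ∈ (⨆ h ∈ {h : Fin n → ℤ | r 0 h}, 𝒜 h) → y • s₀ = 0 := by
      intro y hy
      let φ : R →ₗ[k] S :=
        { toFun := fun y => y • s₀
          map_add' := fun y z => add_smul y z s₀
          map_smul' := fun c y => by simp [smul_assoc] }
      have key : (⨆ h ∈ {h : Fin n → ℤ | r 0 h}, 𝒜 h) ≤ LinearMap.ker φ := by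
        refine iSup₂_le ?_
        intro h hh z hz
        rw [LinearMap.mem_ker]
        show z • s₀ = 0
        have hmem : z • s₀ ∈ 𝒮 (h + g) := hcompat h g z s₀ hz hs₀g
        have hne : h + g ≠ g := by
          intro hc
          have h0 : h = 0 := by
            have := congrArg (fun w => w - g) hc
            simpa using this
          rw [h0] at hh
          exact hirr 0 hh
        exact (Submodule.eq_bot_iff _).mp (hcon _ hne) _ hmem
      have hmem := key hy
      rwa [LinearMap.mem_ker] at hmem
    -- Step 7: the idempotent from semisimplicity of 𝒜 0
    haveI := hss
    let K : Submodule ↥(𝒜 0) ↥(𝒜 0) :=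
      { carrier := {z : ↥(𝒜 0) | (z : R) • s₀ = 0}
        add_mem' := by
          intro a b ha hb
          show ((a + b : ↥(𝒜 0)) : R) • s₀ = 0
          have h1 : ((a + b : ↥(𝒜 0)) : R) = (a : R) + (b : R) := rfl
          rw [h1, add_smul]
          rw [Set.mem_setOf_eq] at ha hb
          rw [ha, hb, add_zero]
        zero_mem' := by
          show ((0 : ↥(𝒜 0)) : R) • s₀ = 0
          rw [show ((0 : ↥(𝒜 0)) : R) = 0 from rfl, zero_smul]
        smul_mem' := by
          intro c z hz
          show ((c • z : ↥(𝒜 0)) : R) • s₀ = 0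
          have h1 : ((c • z : ↥(𝒜 0)) : R) = (c : R) * (z : R) := rfl
          rw [Set.mem_setOf_eq] at hz
          rw [h1, mul_smul, hz, smul_zero] }
    have hmemK : ∀ z : ↥(𝒜 0), z ∈ K ↔ (z : R) • s₀ = 0 := fun z => Iff.rfl
    obtain ⟨I, hKI⟩ := exists_isCompl K
    have h1 : (1 : ↥(𝒜 0)) ∈ K ⊔ I := by rw [hKI.sup_eq_top]; trivial
    obtain ⟨f, hf, e, he, hfe⟩ := Submodule.mem_sup.mp h1
    have hcoe1 : ((1 : ↥(𝒜 0)) : R) = 1 := rfl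
    have hes : (e : R) • s₀ = s₀ := by
      have h2 : ((f : R) + (e : R)) • s₀ = s₀ := by
        have h3 : ((f + e : ↥(𝒜 0)) : R) = (f : R) + (e : R) := rfl
        rw [← h3, hfe, hcoe1, one_smul]
      rw [add_smul, (hmemK f).mp hf, zero_add] at h2
      exact h2
    have hmul_coe : ∀ a b : ↥(𝒜 0), ((a * b : ↥(𝒜 0)) : R) = (a : R) * (b : R) := fun _ _ => rfl
    have hsmul_eq : ∀ a b : ↥(𝒜 0), a • b = a * b := fun _ _ => rfl
    -- every element of I is fixed by right multiplication by e
    have helem : ∀ u : ↥(𝒜 0), u ∈ I → u * e = u := by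
      intro u hu
      have h2 : u = u * f + u * e := by
        rw [← mul_add, hfe, mul_one]
      have huf : u * f ∈ K := by rw [← hsmul_eq]; exact K.smul_mem u hf
      have hue : u * e ∈ I := by rw [← hsmul_eq]; exact I.smul_mem u he
      have huf' : u * f ∈ I := by
        have h3 : u * f = u - u * e := eq_sub_of_add_eq h2.symm
        rw [h3]
        exact Submodule.sub_mem I hu hue
      have h4 : u * f = 0 := by
        have hmem : u * f ∈ K ⊓ I := ⟨huf, huf'⟩
        rw [hKI.inf_eq_bot] at hmem
        exact (Submodule.mem_bot _).mp hmem
      rw [h4, zero_add] at h2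
      exact h2.symm
    have hIK0 : ∀ u : ↥(𝒜 0), u ∈ I → (u : R) • s₀ = 0 → u = 0 := by
      intro u hu hu0
      have hmem : u ∈ K ⊓ I := ⟨(hmemK u).mpr hu0, hu⟩
      rw [hKI.inf_eq_bot] at hmem
      exact (Submodule.mem_bot _).mp hmem
    have heR : (e : R) * (e : R) = (e : R) := by
      rw [← hmul_coe, helem e he]
    have heR0 : (e : R) ≠ 0 := by
      intro hc
      apply hs₀0
      rw [← hes, hc, zero_smul]
    refine ⟨g, s₀, (e : R), hs₀g, hcon, e.2, heR, heR0, ?_, hes, ?_, ?_⟩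
    · -- primitivity
      intro a b ha hb haa hbb hab hba habe
      by_cases ha0 : a = 0
      · exact Or.inl ha0
      right
      have haE : a * (e : R) = a := by
        rw [← habe, mul_add, haa, hab, add_zero]
      have hbE : b * (e : R) = b := by
        rw [← habe, mul_add, hba, hbb, zero_add]
      have haI : (⟨a, ha⟩ : ↥(𝒜 0)) ∈ I := by
        have h3 : (⟨a, ha⟩ : ↥(𝒜 0)) = ⟨a, ha⟩ * e :=
          Subtype.ext (by rw [hmul_coe]; exact haE.symm)
        rw [h3, ← hsmul_eq]
        exact I.smul_mem _ he
      have hbI : (⟨b, hb⟩ : ↥(𝒜 0)) ∈ I := by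
        have h3 : (⟨b, hb⟩ : ↥(𝒜 0)) = ⟨b, hb⟩ * e :=
          Subtype.ext (by rw [hmul_coe]; exact hbE.symm)
        rw [h3, ← hsmul_eq]
        exact I.smul_mem _ he
      have has0 : a • s₀ ≠ 0 := by
        intro hc
        apply ha0
        have h3 := hIK0 _ haI hc
        exact congrArg Subtype.val h3
      -- the R-submodule (𝒜 0) • (a • s₀)
      let Wk : Submodule k S :=
        { carrier := {x | ∃ y, y ∈ 𝒜 0 ∧ x = (y * a) • s₀}
          add_mem' := by
            rintro x₁ x₂ ⟨y₁, hy₁, rfl⟩ ⟨y₂, hy₂, rfl⟩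
            exact ⟨y₁ + y₂, Submodule.add_mem _ hy₁ hy₂, by rw [add_mul, add_smul]⟩
          zero_mem' := ⟨0, Submodule.zero_mem _, by rw [zero_mul, zero_smul]⟩
          smul_mem' := by
            rintro c x ⟨y, hy, rfl⟩
            exact ⟨c • y, Submodule.smul_mem _ c hy, by rw [smul_mul_assoc, smul_assoc]⟩ }
      have hWkmem : ∀ x : S, x ∈ Wk ↔ ∃ y, y ∈ 𝒜 0 ∧ x = (y * a) • s₀ := fun x => Iff.rfl
      have hWkR : ∀ (x' : R) (x : S), x ∈ Wk → x' • x ∈ Wk := by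
        intro x' x hx
        obtain ⟨y, hy, rfl⟩ := (hWkmem x).mp hx
        rw [← DirectSum.sum_support_decompose 𝒜 x', Finset.sum_smul]
        refine Submodule.sum_mem _ ?_
        intro c _
        rw [← mul_smul]
        by_cases hc : c = 0
        · subst hc
          refine (hWkmem _).mpr ⟨((DirectSum.decompose 𝒜 x') 0 : R) * y, ?_, by rw [mul_assoc]⟩
          have h3 := SetLike.mul_mem_graded ((DirectSum.decompose 𝒜 x') 0).2 hy
          rwa [add_zero] at h3
        · by_cases hA : 𝒜 c = ⊥
          · rw [(Submodule.eq_bot_iff _).mp hA _ ((DirectSum.decompose 𝒜 x') c).2, zero_mul,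
              zero_smul]
            exact Submodule.zero_mem Wk
          · have hya : y * a ∈ 𝒜 0 := by
              have h3 := SetLike.mul_mem_graded hy ha
              rwa [add_zero] at h3
            have hmemc : ((DirectSum.decompose 𝒜 x') c : R) * (y * a) ∈ 𝒜 c := by
              have h3 := SetLike.mul_mem_graded ((DirectSum.decompose 𝒜 x') c).2 hya
              rwa [add_zero] at h3
            have hmem : (((DirectSum.decompose 𝒜 x') c : R) * (y * a)) • s₀ ∈ 𝒮 (c + g) :=
              hcompat c g _ s₀ hmemc hs₀g
            have hne : c + g ≠ g := by
              intro hcg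
              apply hc
              have := congrArg (fun w => w - g) hcg
              simpa using this
            rw [(Submodule.eq_bot_iff _).mp (hcon _ hne) _ hmem]
            exact Submodule.zero_mem Wk
      rcases hsimp' (ofKAux Wk hWkR) with hWb | hWt
      · exfalso
        apply has0
        have hmem : a • s₀ ∈ ofKAux Wk hWkR :=
          (mem_ofKAux _ _ _).mpr ⟨1, SetLike.one_mem_graded 𝒜, by rw [one_mul]⟩
        rw [hWb] at hmem
        exact (Submodule.mem_bot _).mp hmem
      · have hbW : b • s₀ ∈ Wk := by
          have hmem : b • s₀ ∈ ofKAux Wk hWkR := hWt ▸ Submodule.mem_top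
          exact (mem_ofKAux _ _ _).mp hmem
        obtain ⟨y, hy, hby⟩ := (hWkmem _).mp hbW
        have hya : y * a ∈ 𝒜 0 := by
          have h3 := SetLike.mul_mem_graded hy ha
          rwa [add_zero] at h3
        have hyaI : (⟨y * a, hya⟩ : ↥(𝒜 0)) ∈ I := by
          have h3 : (⟨y * a, hya⟩ : ↥(𝒜 0)) = (⟨y, hy⟩ : ↥(𝒜 0)) • (⟨a, ha⟩ : ↥(𝒜 0)) :=
            Subtype.ext rfl
          rw [h3]
          exact I.smul_mem _ haI
        have huI : (⟨b, hb⟩ : ↥(𝒜 0)) - ⟨y * a, hya⟩ ∈ I := Submodule.sub_mem I hbI hyaI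
        have hu0 : (((⟨b, hb⟩ : ↥(𝒜 0)) - ⟨y * a, hya⟩ : ↥(𝒜 0)) : R) • s₀ = 0 := by
          have hcoe : (((⟨b, hb⟩ : ↥(𝒜 0)) - ⟨y * a, hya⟩ : ↥(𝒜 0)) : R) = b - y * a := rfl
          rw [hcoe, sub_smul, ← hby, sub_self]
        have h5 := hIK0 _ huI hu0
        have h6 : b - y * a = 0 := congrArg Subtype.val h5
        have hbya : b = y * a := by
          have := sub_eq_zero.mp h6
          exact this
        have h7 : b * a = b := by
          rw [hbya, mul_assoc, haa, ← hbya]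
        rw [hba] at h7
        exact h7.symm
    · -- span
      rcases hsimp' (Submodule.span R {s₀}) with hb | ht
      · exfalso
        apply hs₀0
        have hmem : s₀ ∈ Submodule.span R {s₀} := Submodule.mem_span_singleton_self s₀
        rw [hb] at hmem
        exact (Submodule.mem_bot _).mp hmem
      · exact ht
    · -- kernel property
      intro x
      constructor
      · intro hx0
        have hx₀mem : ((DirectSum.decompose 𝒜 x) 0 : R) ∈ 𝒜 0 := ((DirectSum.decompose 𝒜 x) 0).2
        have hkey : x - ((DirectSum.decompose 𝒜 x) 0 : R) =
            ∑ c ∈ ((DirectSum.decompose 𝒜 x).support.erase 0),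
              ((DirectSum.decompose 𝒜 x) c : R) := by
          by_cases h0 : (0 : Fin n → ℤ) ∈ (DirectSum.decompose 𝒜 x).support
          · have h1 := Finset.sum_erase_add ((DirectSum.decompose 𝒜 x).support)
              (fun c => ((DirectSum.decompose 𝒜 x) c : R)) h0
            rw [DirectSum.sum_support_decompose 𝒜 x] at h1
            exact (eq_sub_of_add_eq h1).symm
          · rw [Finset.erase_eq_of_notMem h0]
            have h2 : ((DirectSum.decompose 𝒜 x) 0 : R) = 0 := by
              rw [DFinsupp.notMem_support_iff.mp h0]; rfl
            rw [h2, sub_zero]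
            exact (DirectSum.sum_support_decompose 𝒜 x).symm
        have hpos : x - ((DirectSum.decompose 𝒜 x) 0 : R) ∈
            (⨆ h ∈ {h : Fin n → ℤ | r 0 h}, 𝒜 h) := by
          rw [hkey]
          refine Submodule.sum_mem _ ?_
          intro c hc
          obtain ⟨hc0, hcs⟩ := Finset.mem_erase.mp hc
          have hrc : r 0 c := by
            by_contra hcon
            have hbot := hposR c (not_or.mpr ⟨hc0, hcon⟩)
            have h3 := (Submodule.eq_bot_iff _).mp hbot _ ((DirectSum.decompose 𝒜 x) c).2
            exact (DFinsupp.mem_support_iff.mp hcs) (Subtype.ext h3)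
          exact Submodule.mem_iSup_of_mem c
            (Submodule.mem_iSup_of_mem hrc ((DirectSum.decompose 𝒜 x) c).2)
        have hxanni : ((x - ((DirectSum.decompose 𝒜 x) 0 : R)) * (e : R)) • s₀ = 0 := by
          rw [mul_smul, hes]
          exact hposmap _ hpos
        have hx₀0 : (((DirectSum.decompose 𝒜 x) 0 : R) * (e : R)) • s₀ = 0 := by
          have h6 : ((DirectSum.decompose 𝒜 x) 0 : R) * (e : R) =
              x * (e : R) - (x - ((DirectSum.decompose 𝒜 x) 0 : R)) * (e : R) := by
            rw [sub_mul]; abel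
          rw [h6, sub_smul, hx0, hxanni, sub_zero]
        have hx₀e_mem : ((DirectSum.decompose 𝒜 x) 0 : R) * (e : R) ∈ 𝒜 0 := by
          have h3 := SetLike.mul_mem_graded hx₀mem e.2
          rwa [add_zero] at h3
        have hI' : (⟨((DirectSum.decompose 𝒜 x) 0 : R) * (e : R), hx₀e_mem⟩ : ↥(𝒜 0)) ∈ I := by
          have h7 : (⟨((DirectSum.decompose 𝒜 x) 0 : R) * (e : R), hx₀e_mem⟩ : ↥(𝒜 0)) =
              (⟨((DirectSum.decompose 𝒜 x) 0 : R), hx₀mem⟩ : ↥(𝒜 0)) • e := Subtype.ext rfl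
          rw [h7]
          exact I.smul_mem _ he
        have h8 := hIK0 _ hI' hx₀0
        have h9 : ((DirectSum.decompose 𝒜 x) 0 : R) * (e : R) = 0 := congrArg Subtype.val h8
        refine ⟨x - ((DirectSum.decompose 𝒜 x) 0 : R), hpos, ?_⟩
        rw [sub_mul, h9, sub_zero]
      · rintro ⟨y, hy, hxy⟩
        rw [hxy, mul_smul, hes]
        exact hposmap y hy
end
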